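/- arXiv:0906.2902 — 6 statements merged into one kernel-verified Lean document; each statement's English description precedes it below -/
import Mathlib

section
/- Let A be a positive self-adjoint operator on L²(X,μ) with F(λ) = ‖χ_A([0,λ])‖_{1,∞} finite. Then every nonzero f ∈ L²(X) satisfies the generalized L² Moser inequality ∫_X |f(x)|² F^{-1}(|f(x)|²/(4‖f‖₂²)) dμ ≤ 4 E(f), where F^{-1}(y) = 0 if y < F(0) and F^{-1}(y) = sup{λ : F(λ) ≤ y} otherwise. -/
open MeasureTheory Set
open scoped ENNReal InnerProductSpace

variable {X : Type*} [MeasurableSpace X]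

/-- The `L¹ → L^∞` operator norm of an operator on `L²`, computed on `L¹ ∩ L²`. -/
noncomputable def opNorm1infty (μ : Measure X) (T : Lp ℝ 2 μ →L[ℝ] Lp ℝ 2 μ) : ℝ≥0∞ :=
  ⨆ (f : Lp ℝ 2 μ) (_ : eLpNorm (⇑f) 1 μ ≤ 1), eLpNorm (⇑(T f)) ⊤ μ

lemma opNorm1infty_bound (μ : Measure X) (T : Lp ℝ 2 μ →L[ℝ] Lp ℝ 2 μ) (u : Lp ℝ 2 μ)
    (h1 : eLpNorm (⇑u) 1 μ ≠ ⊤) :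
    eLpNorm (⇑(T u)) ⊤ μ ≤ opNorm1infty μ T * eLpNorm (⇑u) 1 μ := by
  rcases eq_or_ne (eLpNorm (⇑u) 1 μ) 0 with h0 | h0
  · have hu0 : (⇑u) =ᵐ[μ] 0 := (eLpNorm_eq_zero_iff (Lp.aestronglyMeasurable u) one_ne_zero).mp h0
    have hu : u = 0 := Lp.eq_zero_iff_ae_eq_zero.mpr hu0
    subst hu
    rw [map_zero]
    have h : eLpNorm (⇑(0 : Lp ℝ 2 μ)) ⊤ μ = 0 := by
      rw [eLpNorm_congr_ae (Lp.coeFn_zero ℝ 2 μ)]; exact eLpNorm_zero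
    exact h.le.trans zero_le
  · have hr : 0 < (eLpNorm (⇑u) 1 μ).toReal := ENNReal.toReal_pos h0 h1
    obtain ⟨r, hrdef, hrpos⟩ : ∃ r : ℝ, r = (eLpNorm (⇑u) 1 μ).toReal ∧ 0 < r := ⟨_, rfl, hr⟩
    have he : eLpNorm (⇑u) 1 μ = ENNReal.ofReal r := by
      rw [hrdef, ENNReal.ofReal_toReal h1]
    have hv1 : eLpNorm (⇑(r⁻¹ • u)) 1 μ ≤ 1 := by
      rw [eLpNorm_congr_ae (Lp.coeFn_smul r⁻¹ u), eLpNorm_const_smul,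
        Real.enorm_eq_ofReal (by positivity), he,
        ← ENNReal.ofReal_mul (by positivity), inv_mul_cancel₀ hrpos.ne', ENNReal.ofReal_one]
    have hle : eLpNorm (⇑(T (r⁻¹ • u))) ⊤ μ ≤ opNorm1infty μ T :=
      le_iSup₂_of_le (r⁻¹ • u) hv1 le_rfl
    have huv : u = r • (r⁻¹ • u) := by rw [smul_smul, mul_inv_cancel₀ hrpos.ne', one_smul]
    have hTe : eLpNorm (⇑(T u)) ⊤ μ
        = ENNReal.ofReal r * eLpNorm (⇑(T (r⁻¹ • u))) ⊤ μ := by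
      conv_lhs => rw [huv]
      rw [ContinuousLinearMap.map_smul, eLpNorm_congr_ae (Lp.coeFn_smul r (T (r⁻¹ • u))),
        eLpNorm_const_smul, Real.enorm_eq_ofReal hrpos.le]
    rw [hTe, he, mul_comm (opNorm1infty μ T)]
    exact mul_le_mul_right hle _

lemma layer_id (a : ℝ≥0∞) :
    ∫⁻ l in Ioi (0:ℝ), {l' : ℝ | ENNReal.ofReal l' < a}.indicator 1 l = a := by
  have hs : MeasurableSet {l' : ℝ | ENNReal.ofReal l' < a} :=
    measurableSet_lt (ENNReal.measurable_ofReal.comp measurable_id) measurable_const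
  rw [lintegral_indicator_one hs, Measure.restrict_apply hs]
  rcases eq_or_ne a ⊤ with rfl | ha
  · have : {l' : ℝ | ENNReal.ofReal l' < ⊤} = univ := by
      ext l; simp [lt_top_iff_ne_top]
    rw [this, univ_inter, Real.volume_Ioi]
  · have h2 : {l' : ℝ | ENNReal.ofReal l' < a} ∩ Ioi 0 = Ioo 0 a.toReal := by
      ext l
      simp only [mem_inter_iff, mem_setOf_eq, mem_Ioi, mem_Ioo]
      constructor
      · rintro ⟨h, hl⟩
        exact ⟨hl, (ENNReal.ofReal_lt_iff_lt_toReal hl.le ha).mp h⟩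
      · rintro ⟨hl, h⟩
        exact ⟨(ENNReal.ofReal_lt_iff_lt_toReal hl.le ha).mpr h, hl⟩
    rw [h2, Real.volume_Ioo, sub_zero, ENNReal.ofReal_toReal ha]

lemma inner_L2 (μ : Measure X) (u v : Lp ℝ 2 μ) : ⟪u, v⟫_ℝ = ∫ x, u x * v x ∂μ := by
  rw [L2.inner_def]; simp [RCLike.inner_apply, mul_comm]

lemma integrable_mul_L2 (μ : Measure X) (u v : Lp ℝ 2 μ) :
    Integrable (fun x => u x * v x) μ := by
  simpa [RCLike.inner_apply, mul_comm] using L2.integrable_inner (𝕜 := ℝ) u v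

set_option maxHeartbeats 1000000 in
lemma core_lemma (μ : Measure X) (Pr : Lp ℝ 2 μ →L[ℝ] Lp ℝ 2 μ)
    (hproj : Pr ∘L Pr = Pr)
    (hsymm : ∀ u v : Lp ℝ 2 μ, ⟪Pr u, v⟫_ℝ = ⟪u, Pr v⟫_ℝ)
    (f : Lp ℝ 2 μ) (hf0 : 0 < ‖f‖) (ftil : X → ℝ) (hftil : Measurable ftil)
    (hfeq : ⇑f =ᵐ[μ] ftil)
    (K : ℝ) (hK : opNorm1infty μ Pr = ENNReal.ofReal K)
    (b : ℝ) (hb : 0 < b) (hbK : 4 * K * ‖f‖ ^ 2 ≤ b) :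
    ∫⁻ x in {x | b ≤ ftil x ^ 2}, ENNReal.ofReal (ftil x ^ 2) ∂μ
      ≤ ENNReal.ofReal (4 * (‖f‖ ^ 2 - ⟪Pr f, f⟫_ℝ)) := by
  set A : Set X := {x | b ≤ ftil x ^ 2} with hAdef
  have hA : MeasurableSet A := measurableSet_le measurable_const (hftil.pow_const 2)
  have hmem : MemLp (A.indicator ftil) 2 μ := ((Lp.memLp f).ae_eq hfeq).indicator hA
  set u : Lp ℝ 2 μ := hmem.toLp _ with hudef
  have hucoe : ⇑u =ᵐ[μ] A.indicator ftil := hmem.coeFn_toLp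
  set s := Real.sqrt b with hsdef
  have hs : 0 < s := Real.sqrt_pos.mpr hb
  set I := ‖u‖ ^ 2 with hIdef
  have hI0 : 0 ≤ I := sq_nonneg _
  have hsq_int : Integrable (fun x => (A.indicator ftil x) ^ 2) μ := by
    refine (integrable_mul_L2 μ u u).congr ?_
    filter_upwards [hucoe] with x hx
    rw [hx]; ring
  have hI : ∫ x, (A.indicator ftil x) ^ 2 ∂μ = I := by
    have h1 : ⟪u, u⟫_ℝ = ∫ x, u x * u x ∂μ := inner_L2 μ u u
    have h2 : ∫ x, u x * u x ∂μ = ∫ x, (A.indicator ftil x) ^ 2 ∂μ := by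
      refine integral_congr_ae ?_
      filter_upwards [hucoe] with x hx
      rw [hx]; ring
    rw [hIdef, ← real_inner_self_eq_norm_sq, h1, h2]
  have hptw : ∀ᵐ x ∂μ, (‖u x‖₊ : ℝ≥0∞) ≤ ENNReal.ofReal ((A.indicator ftil x) ^ 2 / s) := by
    filter_upwards [hucoe] with x hx
    rw [hx, ← enorm_eq_nnnorm, Real.enorm_eq_ofReal_abs]
    apply ENNReal.ofReal_le_ofReal
    by_cases hxA : x ∈ A
    · rw [indicator_of_mem hxA]
      have habs : s ≤ |ftil x| := by
        rw [hsdef, ← Real.sqrt_sq_eq_abs]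
        exact Real.sqrt_le_sqrt hxA
      rw [le_div_iff₀ hs]
      calc |ftil x| * s ≤ |ftil x| * |ftil x| := by nlinarith [abs_nonneg (ftil x)]
        _ = ftil x ^ 2 := by rw [← abs_mul, abs_mul_self]; ring
    · rw [indicator_of_notMem hxA]
      simp [hs.le]
  have he1 : eLpNorm (⇑u) 1 μ ≤ ENNReal.ofReal (I / s) := by
    rw [eLpNorm_one_eq_lintegral_enorm]
    calc ∫⁻ x, (‖u x‖₊ : ℝ≥0∞) ∂μ
        ≤ ∫⁻ x, ENNReal.ofReal ((A.indicator ftil x) ^ 2 / s) ∂μ := lintegral_mono_ae hptw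
      _ = ENNReal.ofReal (∫ x, (A.indicator ftil x) ^ 2 / s ∂μ) := by
          rw [← ofReal_integral_eq_lintegral_ofReal (hsq_int.div_const s)
            (ae_of_all μ fun x => div_nonneg (sq_nonneg _) hs.le)]
      _ = ENNReal.ofReal (I / s) := by rw [integral_div, hI]
  have e1ne : eLpNorm (⇑u) 1 μ ≠ ⊤ := (lt_of_le_of_lt he1 ENNReal.ofReal_lt_top).ne
  set e := (eLpNorm (⇑u) 1 μ).toReal with hedef
  have he0 : 0 ≤ e := ENNReal.toReal_nonneg
  have heI : e ≤ I / s := ENNReal.toReal_le_of_le_ofReal (div_nonneg hI0 hs.le) he1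
  have hop : eLpNorm (⇑(Pr u)) ⊤ μ ≤ ENNReal.ofReal K * eLpNorm (⇑u) 1 μ := by
    rw [← hK]; exact opNorm1infty_bound μ Pr u e1ne
  set k := max K 0 with hkdef
  have hk0 : 0 ≤ k := le_max_right _ _
  have hinner_uPru : ⟪u, Pr u⟫_ℝ ≤ e * (k * e) := by
    have hbound : ∫⁻ x, (‖u x * (Pr u) x‖₊ : ℝ≥0∞) ∂μ
        ≤ eLpNorm (⇑u) 1 μ * (ENNReal.ofReal K * eLpNorm (⇑u) 1 μ) := by
      have hae : ∀ᵐ x ∂μ, (‖(Pr u) x‖₊ : ℝ≥0∞) ≤ eLpNorm (⇑(Pr u)) ⊤ μ := by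
        rw [eLpNorm_exponent_top]
        exact ae_le_eLpNormEssSup
      calc ∫⁻ x, (‖u x * (Pr u) x‖₊ : ℝ≥0∞) ∂μ
          = ∫⁻ x, (‖u x‖₊ : ℝ≥0∞) * (‖(Pr u) x‖₊ : ℝ≥0∞) ∂μ := by
            simp_rw [nnnorm_mul, ENNReal.coe_mul]
        _ ≤ ∫⁻ x, (‖u x‖₊ : ℝ≥0∞) * eLpNorm (⇑(Pr u)) ⊤ μ ∂μ := by
            refine lintegral_mono_ae ?_
            filter_upwards [hae] with x hx
            exact mul_le_mul_right hx _
        _ = (∫⁻ x, (‖u x‖₊ : ℝ≥0∞) ∂μ) * eLpNorm (⇑(Pr u)) ⊤ μ :=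
            lintegral_mul_const'' _ (Lp.aestronglyMeasurable u).enorm
        _ = eLpNorm (⇑u) 1 μ * eLpNorm (⇑(Pr u)) ⊤ μ := by rw [eLpNorm_one_eq_lintegral_enorm]; rfl
        _ ≤ eLpNorm (⇑u) 1 μ * (ENNReal.ofReal K * eLpNorm (⇑u) 1 μ) :=
            mul_le_mul_right hop _
    have habs : ⟪u, Pr u⟫_ℝ
        ≤ (eLpNorm (⇑u) 1 μ * (ENNReal.ofReal K * eLpNorm (⇑u) 1 μ)).toReal := by
      rw [inner_L2]
      calc ∫ x, u x * (Pr u) x ∂μ ≤ ‖∫ x, u x * (Pr u) x ∂μ‖ := le_abs_self _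
        _ ≤ (∫⁻ x, ENNReal.ofReal ‖u x * (Pr u) x‖ ∂μ).toReal := norm_integral_le_lintegral_norm _
        _ ≤ (eLpNorm (⇑u) 1 μ * (ENNReal.ofReal K * eLpNorm (⇑u) 1 μ)).toReal := by
            apply ENNReal.toReal_mono
            · exact ENNReal.mul_ne_top e1ne (ENNReal.mul_ne_top ENNReal.ofReal_ne_top e1ne)
            · simp only [ofReal_norm]
              exact hbound
    calc ⟪u, Pr u⟫_ℝ ≤ (eLpNorm (⇑u) 1 μ * (ENNReal.ofReal K * eLpNorm (⇑u) 1 μ)).toReal := habs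
      _ = e * (k * e) := by
          rw [ENNReal.toReal_mul, ENNReal.toReal_mul, ENNReal.toReal_ofReal']
  have hPrPr : ∀ w : Lp ℝ 2 μ, Pr (Pr w) = Pr w := by
    intro w
    conv_rhs => rw [← hproj]
    rfl
  have hPru_sq : ‖Pr u‖ ^ 2 ≤ k * e ^ 2 := by
    have h1 : ⟪Pr u, Pr u⟫_ℝ = ⟪u, Pr u⟫_ℝ := by
      rw [hsymm u (Pr u), hPrPr u]
    have h2 := hinner_uPru
    rw [← h1, real_inner_self_eq_norm_sq] at h2
    nlinarith [h2]
  have hsk : Real.sqrt k ≤ s / (2 * ‖f‖) := by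
    have hkb : k ≤ b / (4 * ‖f‖ ^ 2) := by
      rw [hkdef, max_le_iff]
      refine ⟨?_, by positivity⟩
      rw [le_div_iff₀ (by positivity)]
      nlinarith
    have hrw : b / (4 * ‖f‖ ^ 2) = (s / (2 * ‖f‖)) ^ 2 := by
      rw [div_pow, hsdef, Real.sq_sqrt hb.le]
      ring_nf
    calc Real.sqrt k ≤ Real.sqrt (b / (4 * ‖f‖ ^ 2)) := Real.sqrt_le_sqrt hkb
      _ = s / (2 * ‖f‖) := by rw [hrw, Real.sqrt_sq (by positivity)]
  have hPru_norm : ‖Pr u‖ ≤ Real.sqrt k * e := by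
    have h := Real.sqrt_le_sqrt hPru_sq
    rw [Real.sqrt_sq (norm_nonneg _)] at h
    calc ‖Pr u‖ ≤ Real.sqrt (k * e ^ 2) := h
      _ = Real.sqrt k * e := by rw [Real.sqrt_mul hk0, Real.sqrt_sq he0]
  have huPrf : ⟪u, Pr f⟫_ℝ ≤ I / 2 := by
    have h5 : s / (2 * ‖f‖) * (I / s) * ‖f‖ = I / 2 := by
      field_simp
    calc ⟪u, Pr f⟫_ℝ = ⟪Pr u, f⟫_ℝ := (hsymm u f).symm
      _ ≤ ‖Pr u‖ * ‖f‖ := real_inner_le_norm _ _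
      _ ≤ (Real.sqrt k * e) * ‖f‖ := mul_le_mul_of_nonneg_right hPru_norm (norm_nonneg _)
      _ ≤ (s / (2 * ‖f‖) * (I / s)) * ‖f‖ := by
          refine mul_le_mul_of_nonneg_right ?_ (norm_nonneg _)
          exact mul_le_mul hsk heI he0 (by positivity)
      _ = I / 2 := h5
  have hufI : ⟪u, f⟫_ℝ = I := by
    rw [inner_L2]
    have h : ∫ x, u x * f x ∂μ = ∫ x, (A.indicator ftil x) ^ 2 ∂μ := by
      refine integral_congr_ae ?_
      filter_upwards [hucoe, hfeq] with x hx hfx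
      rw [hx, hfx]
      by_cases hxA : x ∈ A
      · rw [indicator_of_mem hxA]; ring
      · rw [indicator_of_notMem hxA]; ring
    rw [h, hI]
  set D := ‖f - Pr f‖ with hD
  have hD0 : 0 ≤ D := norm_nonneg _
  have hID : I ≤ ‖u‖ * D + I / 2 := by
    have hsub : ⟪u, f - Pr f⟫_ℝ = ⟪u, f⟫_ℝ - ⟪u, Pr f⟫_ℝ := inner_sub_right _ _ _
    have h2 : ⟪u, f - Pr f⟫_ℝ ≤ ‖u‖ * D := real_inner_le_norm _ _
    linarith [hufI, hsub, h2, huPrf]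
  have hI4D : I ≤ 4 * D ^ 2 := by
    have hu2 : ‖u‖ ^ 2 ≤ ‖u‖ * D + ‖u‖ ^ 2 / 2 := by rw [← hIdef]; exact hID
    nlinarith [norm_nonneg u, hD0, sq_nonneg (‖u‖ - 2 * D)]
  have hDsq : D ^ 2 = ‖f‖ ^ 2 - ⟪Pr f, f⟫_ℝ := by
    have h1 : ‖f - Pr f‖ ^ 2 = ‖f‖ ^ 2 - 2 * ⟪f, Pr f⟫_ℝ + ‖Pr f‖ ^ 2 := norm_sub_sq_real f (Pr f)
    have h2 : ‖Pr f‖ ^ 2 = ⟪f, Pr f⟫_ℝ := by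
      rw [← real_inner_self_eq_norm_sq, hsymm f (Pr f), hPrPr f]
    have h3 : ⟪Pr f, f⟫_ℝ = ⟪f, Pr f⟫_ℝ := real_inner_comm _ _
    rw [hD, h1, h2, h3]
    ring
  have hfinal : I ≤ 4 * (‖f‖ ^ 2 - ⟪Pr f, f⟫_ℝ) := by
    rw [← hDsq]; linarith
  have hLHS : ∫⁻ x in A, ENNReal.ofReal (ftil x ^ 2) ∂μ = ENNReal.ofReal I := by
    rw [← lintegral_indicator hA]
    have h : ∀ x, A.indicator (fun x => ENNReal.ofReal (ftil x ^ 2)) x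
        = ENNReal.ofReal ((A.indicator ftil x) ^ 2) := by
      intro x
      by_cases hxA : x ∈ A
      · rw [indicator_of_mem hxA, indicator_of_mem hxA]
      · rw [indicator_of_notMem hxA, indicator_of_notMem hxA]
        simp
    rw [lintegral_congr h,
      ← ofReal_integral_eq_lintegral_ofReal hsq_int (ae_of_all μ fun x => sq_nonneg _),
      hI]
  rw [hLHS]
  exact ENNReal.ofReal_le_ofReal hfinal

set_option maxHeartbeats 1000000 in
/-- The generalized `L²`-Moser inequality (Theorem 2.2, inequality (31)).
The positive self-adjoint operator `A` on `L²(X,μ)` is encoded by its spectral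
projections `Pr l = χ_A([0,l])` and the spectral measures `ν g`, with
`ν g ([0,l]) = ⟨Π_{[0,l]} g, g⟩`, `ν g (ℝ) = ‖g‖²`, and energy
`E(g) = ∫ x dν_g`.  With `F(λ) = ‖χ_A([0,λ])‖_{1,∞}` finite and its completed
right-continuous inverse `F⁻¹` (equal to `0` below `F(0)` and to
`sup {λ | F λ ≤ y}` otherwise), every nonzero `f ∈ L²` satisfies
`∫_X |f(x)|² F⁻¹(|f(x)|²/(4‖f‖₂²)) dμ ≤ 4 E(f)`. -/
theorem stmt_9 (μ : Measure X)
    (Pr : ℝ → (Lp ℝ 2 μ →L[ℝ] Lp ℝ 2 μ))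
    (hproj : ∀ l, Pr l ∘L Pr l = Pr l)
    (hsymm : ∀ l f g, ⟪Pr l f, g⟫_ℝ = ⟪f, Pr l g⟫_ℝ)
    (hmono : ∀ l l', l ≤ l' → Pr l' ∘L Pr l = Pr l)
    (ν : Lp ℝ 2 μ → Measure ℝ)
    (hν0 : ∀ g, ν g (Set.Iio 0) = 0)
    (hν : ∀ g, ∀ l ≥ (0 : ℝ), ν g (Set.Iic l) = ENNReal.ofReal ⟪Pr l g, g⟫_ℝ)
    (hνtot : ∀ g, ν g Set.univ = ENNReal.ofReal (‖g‖ ^ 2))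
    (F : ℝ → ℝ)
    (hF : ∀ l ≥ (0 : ℝ), opNorm1infty μ (Pr l) = ENNReal.ofReal (F l))
    (Finv : ℝ → ℝ≥0∞)
    (hFinv : ∀ y, Finv y = if y < F 0 then 0
      else sSup ((fun l => ENNReal.ofReal l) '' {l | 0 ≤ l ∧ F l ≤ y}))
    (f : Lp ℝ 2 μ) (hf : f ≠ 0)
    (E : ℝ) (hEfin : Integrable (fun x => x) (ν f)) (hE : E = ∫ x, x ∂(ν f)) :
    ∫⁻ x, ENNReal.ofReal ((f : X → ℝ) x ^ 2)
        * Finv ((f : X → ℝ) x ^ 2 / (4 * ‖f‖ ^ 2)) ∂μ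
      ≤ ENNReal.ofReal (4 * E) := by
  have hfnorm : (0:ℝ) < ‖f‖ := norm_pos_iff.mpr hf
  set c : ℝ := 4 * ‖f‖ ^ 2 with hc
  have hc0 : 0 < c := by positivity
  -- measurable representative
  obtain ⟨ftil, hftil_meas, hfeq⟩ : ∃ g0 : X → ℝ, Measurable g0 ∧ ⇑f =ᵐ[μ] g0 :=
    ⟨(Lp.aestronglyMeasurable f).mk _,
      (Lp.aestronglyMeasurable f).stronglyMeasurable_mk.measurable,
      (Lp.aestronglyMeasurable f).ae_eq_mk⟩
  -- monotonicity and measurability of Finv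
  have hFinv_mono : Monotone Finv := by
    intro a b hab
    rw [hFinv a, hFinv b]
    by_cases hb' : b < F 0
    · rw [if_pos (lt_of_le_of_lt hab hb'), if_pos hb']
    · rw [if_neg hb']
      by_cases ha' : a < F 0
      · rw [if_pos ha']; exact zero_le
      · rw [if_neg ha']
        refine sSup_le_sSup (image_mono ?_)
        intro l hl
        exact ⟨hl.1, hl.2.trans hab⟩
  have hFinv_meas : Measurable Finv := hFinv_mono.measurable
  set y : X → ℝ := fun x => ftil x ^ 2 / c with hy
  have hy_meas : Measurable y := (hftil_meas.pow_const 2).div_const c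
  set g : X → ℝ≥0∞ := fun x => ENNReal.ofReal (ftil x ^ 2) with hg
  have hg_meas : Measurable g := ENNReal.measurable_ofReal.comp (hftil_meas.pow_const 2)
  set μ' : Measure X := μ.withDensity g with hμ'
  have hsq_int : Integrable (fun x => ftil x ^ 2) μ := by
    refine (integrable_mul_L2 μ f f).congr ?_
    filter_upwards [hfeq] with x hx
    rw [hx]; ring
  have hμ'fin : IsFiniteMeasure μ' := by
    constructor
    rw [hμ', withDensity_apply _ MeasurableSet.univ, Measure.restrict_univ, hg]
    rw [← ofReal_integral_eq_lintegral_ofReal hsq_int (ae_of_all μ fun x => sq_nonneg _)]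
    exact ENNReal.ofReal_lt_top
  haveI := hμ'fin
  -- the value of ν f on upper intervals
  have hPrPr : ∀ (l : ℝ) (w : Lp ℝ 2 μ), Pr l (Pr l w) = Pr l w := by
    intro l w
    conv_rhs => rw [← hproj l]
    rfl
  have hinner_nonneg : ∀ l : ℝ, 0 ≤ ⟪Pr l f, f⟫_ℝ ∧ ⟪Pr l f, f⟫_ℝ ≤ ‖f‖ ^ 2 := by
    intro l
    have h1 : ⟪Pr l f, f⟫_ℝ = ‖Pr l f‖ ^ 2 := by
      have h := hsymm l f (Pr l f)
      rw [hPrPr l f] at h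
      calc ⟪Pr l f, f⟫_ℝ = ⟪f, Pr l f⟫_ℝ := real_inner_comm _ _
        _ = ⟪Pr l f, Pr l f⟫_ℝ := h.symm
        _ = ‖Pr l f‖ ^ 2 := real_inner_self_eq_norm_sq _
    have h2 : ⟪Pr l f, f⟫_ℝ ≤ ‖Pr l f‖ * ‖f‖ := real_inner_le_norm _ _
    constructor
    · rw [h1]; positivity
    · nlinarith [norm_nonneg (Pr l f), norm_nonneg f]
  have hνIoi : ∀ l' ≥ (0:ℝ), ν f (Ioi l') = ENNReal.ofReal (‖f‖ ^ 2 - ⟪Pr l' f, f⟫_ℝ) := by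
    intro l' hl'
    have hdisj : Disjoint (Iic l') (Ioi l') := Iic_disjoint_Ioi le_rfl
    have hunion : ν f (Iic l' ∪ Ioi l') = ν f (Iic l') + ν f (Ioi l') :=
      measure_union hdisj measurableSet_Ioi
    rw [Iic_union_Ioi, hνtot f, hν f l' hl'] at hunion
    have hsplit : ENNReal.ofReal (‖f‖ ^ 2)
        = ENNReal.ofReal ⟪Pr l' f, f⟫_ℝ + ENNReal.ofReal (‖f‖ ^ 2 - ⟪Pr l' f, f⟫_ℝ) := by
      rw [← ENNReal.ofReal_add (hinner_nonneg l').1 (by linarith [(hinner_nonneg l').2])]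
      ring_nf
    rw [hsplit] at hunion
    exact ((ENNReal.add_right_inj ENNReal.ofReal_ne_top).mp hunion).symm
  -- the key bound for each level set
  have hset : ∀ (l t0 : ℝ), 0 < l → ENNReal.ofReal l < Finv t0 →
      μ' {x | t0 ≤ y x} ≤ 4 * ν f (Ioi l) := by
    intro l t0 hl ht0
    obtain ⟨l', hl'0, hFl', hll'⟩ : ∃ l', 0 ≤ l' ∧ F l' ≤ t0 ∧ l < l' := by
      rw [hFinv t0] at ht0
      by_cases hcase : t0 < F 0
      · rw [if_pos hcase] at ht0; exact absurd ht0 (by simp)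
      · rw [if_neg hcase] at ht0
        obtain ⟨z, hz, hzgt⟩ := lt_sSup_iff.mp ht0
        obtain ⟨l', hl'mem, rfl⟩ := hz
        refine ⟨l', hl'mem.1, hl'mem.2, ?_⟩
        by_contra hnot
        push_neg at hnot
        exact absurd (ENNReal.ofReal_le_ofReal hnot) (not_le.mpr hzgt)
    have hν_mono : (4:ℝ≥0∞) * ν f (Ioi l') ≤ 4 * ν f (Ioi l) :=
      mul_le_mul_right (measure_mono (Ioi_subset_Ioi hll'.le)) _
    -- rewrite the set
    have hseteq : {x | t0 ≤ y x} = {x | c * t0 ≤ ftil x ^ 2} := by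
      ext x
      simp only [mem_setOf_eq, hy]
      rw [le_div_iff₀ hc0]
      constructor <;> intro h <;> linarith
    rw [hseteq]
    -- core bound for each positive threshold
    have hcore : ∀ b : ℝ, 0 < b → c * t0 ≤ b →
        μ' {x | b ≤ ftil x ^ 2} ≤ 4 * ν f (Ioi l) := by
      intro b hb hbt
      have hDm : MeasurableSet {x | b ≤ ftil x ^ 2} :=
        measurableSet_le measurable_const (hftil_meas.pow_const 2)
      have h1 : μ' {x | b ≤ ftil x ^ 2}
          = ∫⁻ x in {x | b ≤ ftil x ^ 2}, ENNReal.ofReal (ftil x ^ 2) ∂μ := by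
        rw [hμ', withDensity_apply _ hDm]
      have h2 := core_lemma μ (Pr l') (hproj l') (fun u v => hsymm l' u v) f hfnorm ftil
        hftil_meas hfeq (F l') (hF l' hl'0) b hb
        (by
          have h4 : F l' * c ≤ t0 * c := mul_le_mul_of_nonneg_right hFl' hc0.le
          rw [hc] at h4 hbt
          nlinarith [h4, hbt])
      rw [h1]
      refine le_trans (h2) ?_
      have h3 : ENNReal.ofReal (4 * (‖f‖ ^ 2 - ⟪Pr l' f, f⟫_ℝ))
          = 4 * ν f (Ioi l') := by
        rw [hνIoi l' hl'0, ENNReal.ofReal_mul (by norm_num)]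
        norm_num
      rw [h3]
      exact hν_mono
    -- split off the zero set
    have hZ : μ' {x | ftil x ^ 2 ≤ 0} = 0 := by
      have hZm : MeasurableSet {x | ftil x ^ 2 ≤ 0} :=
        measurableSet_le (hftil_meas.pow_const 2) measurable_const
      rw [hμ', withDensity_apply _ hZm]
      have hz0 : ∀ᵐ x ∂μ.restrict {x | ftil x ^ 2 ≤ 0}, g x = 0 := by
        filter_upwards [self_mem_ae_restrict hZm] with x hx
        exact ENNReal.ofReal_eq_zero.mpr hx
      rw [lintegral_congr_ae hz0, lintegral_zero]
    have hsubset : {x | c * t0 ≤ ftil x ^ 2}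
        ⊆ (⋃ m : ℕ, {x | max (c * t0) (1 / (m + 1)) ≤ ftil x ^ 2}) ∪ {x | ftil x ^ 2 ≤ 0} := by
      intro x hx
      rcases le_or_gt (ftil x ^ 2) 0 with h0 | h0
      · exact Or.inr h0
      · left
        obtain ⟨m, hm⟩ := exists_nat_one_div_lt h0
        exact mem_iUnion.mpr ⟨m, max_le hx hm.le⟩
    calc μ' {x | c * t0 ≤ ftil x ^ 2}
        ≤ μ' ((⋃ m : ℕ, {x | max (c * t0) (1 / (m + 1)) ≤ ftil x ^ 2}) ∪ {x | ftil x ^ 2 ≤ 0}) :=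
          measure_mono hsubset
      _ ≤ μ' (⋃ m : ℕ, {x | max (c * t0) (1 / (m + 1 : ℝ)) ≤ ftil x ^ 2}) + μ' {x | ftil x ^ 2 ≤ 0} :=
          measure_union_le _ _
      _ = μ' (⋃ m : ℕ, {x | max (c * t0) (1 / (m + 1 : ℝ)) ≤ ftil x ^ 2}) := by rw [hZ, add_zero]
      _ = ⨆ m : ℕ, μ' {x | max (c * t0) (1 / (m + 1 : ℝ)) ≤ ftil x ^ 2} := by
          refine Monotone.measure_iUnion ?_
          intro m m' hmm x hx
          simp only [mem_setOf_eq] at hx ⊢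
          refine le_trans (max_le_max le_rfl ?_) hx
          apply one_div_le_one_div_of_le (by positivity)
          exact_mod_cast add_le_add_left (Nat.cast_le.mpr hmm) 1
      _ ≤ 4 * ν f (Ioi l) := by
          refine iSup_le fun m => hcore _ (lt_max_of_lt_right (by positivity)) (le_max_left _ _)
  -- bound for the superlevel sets of Finv ∘ y
  have keybound : ∀ l : ℝ, 0 < l →
      μ' {x | ENNReal.ofReal l < Finv (y x)} ≤ 4 * ν f (Ioi l) := by
    intro l hl
    set Y : Set ℝ := {t : ℝ | ENNReal.ofReal l < Finv t} with hY
    have hmem_iff : ∀ x, x ∈ {x | ENNReal.ofReal l < Finv (y x)} ↔ y x ∈ Y := fun x => Iff.rfl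
    rcases Y.eq_empty_or_nonempty with hYe | hYne
    · have : {x | ENNReal.ofReal l < Finv (y x)} = ∅ := by
        ext x
        simp only [mem_setOf_eq, mem_empty_iff_false, iff_false]
        intro hcon
        exact absurd (hmem_iff x |>.mp hcon) (by rw [hYe]; exact notMem_empty _)
      rw [this]
      simp
    · have hbdd : BddBelow Y := by
        refine ⟨F 0, fun t ht => ?_⟩
        by_contra hlt
        push_neg at hlt
        rw [hY, mem_setOf_eq, hFinv t, if_pos hlt] at ht
        exact absurd ht (by simp)
      set t' := sInf Y with ht'
      have hupper : ∀ z ∈ Y, ∀ w, z ≤ w → w ∈ Y := by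
        intro z hz w hzw
        exact lt_of_lt_of_le hz (hFinv_mono hzw)
      by_cases htY : t' ∈ Y
      · have hsub2 : {x | ENNReal.ofReal l < Finv (y x)} ⊆ {x | t' ≤ y x} := by
          intro x hx
          exact csInf_le hbdd ((hmem_iff x).mp hx)
        exact le_trans (measure_mono hsub2) (hset l t' hl htY)
      · have hBn : ∀ n : ℕ, t' + 1 / (n + 1) ∈ Y := by
          intro n
          obtain ⟨z, hzY, hzlt⟩ := (csInf_lt_iff hbdd hYne).mp
            (lt_add_of_pos_right t' (by positivity : (0:ℝ) < 1 / (n + 1)))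
          exact hupper z hzY _ hzlt.le
        have hcover : {x | ENNReal.ofReal l < Finv (y x)}
            = ⋃ n : ℕ, {x | t' + 1 / (n + 1 : ℝ) ≤ y x} := by
          ext x
          simp only [mem_setOf_eq, mem_iUnion]
          constructor
          · intro hx
            have hyY : y x ∈ Y := hx
            have hgt : t' < y x := lt_of_le_of_ne (csInf_le hbdd hyY)
              (fun h => htY (h ▸ hyY))
            obtain ⟨n, hn⟩ := exists_nat_one_div_lt (sub_pos.mpr hgt)
            exact ⟨n, by linarith⟩
          · rintro ⟨n, hn⟩
            exact hupper _ (hBn n) _ hn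
        rw [hcover]
        have hmono2 : Monotone fun n : ℕ => {x | t' + 1 / (n + 1 : ℝ) ≤ y x} := by
          intro m m' hmm x hx
          simp only [mem_setOf_eq] at hx ⊢
          have : (1:ℝ) / (m' + 1) ≤ 1 / (m + 1) := by
            apply one_div_le_one_div_of_le (by positivity)
            exact_mod_cast add_le_add_left (Nat.cast_le.mpr hmm) 1
          linarith
        rw [Monotone.measure_iUnion hmono2]
        exact iSup_le fun n => hset l _ hl (hBn n)
  -- now the layercake/Fubini computation
  have hLHS1 : ∫⁻ x, ENNReal.ofReal ((f : X → ℝ) x ^ 2)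
      * Finv ((f : X → ℝ) x ^ 2 / (4 * ‖f‖ ^ 2)) ∂μ = ∫⁻ x, g x * Finv (y x) ∂μ := by
    refine lintegral_congr_ae ?_
    filter_upwards [hfeq] with x hx
    rw [hg, hy, hc, hx]
  have hLHS2 : ∫⁻ x, g x * Finv (y x) ∂μ = ∫⁻ x, Finv (y x) ∂μ' := by
    have hmeas2 : Measurable fun x => Finv (y x) := hFinv_meas.comp hy_meas
    rw [hμ', lintegral_withDensity_eq_lintegral_mul μ hg_meas hmeas2]
    rfl
  have hLHS3 : ∫⁻ x, Finv (y x) ∂μ'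
      = ∫⁻ x, (∫⁻ l in Ioi (0:ℝ), {l' : ℝ | ENNReal.ofReal l' < Finv (y x)}.indicator 1 l) ∂μ' :=
    lintegral_congr fun x => (layer_id _).symm
  have hswap : ∫⁻ x, (∫⁻ l in Ioi (0:ℝ), {l' : ℝ | ENNReal.ofReal l' < Finv (y x)}.indicator 1 l) ∂μ'
      = ∫⁻ l in Ioi (0:ℝ), ∫⁻ x, {l' : ℝ | ENNReal.ofReal l' < Finv (y x)}.indicator 1 l ∂μ' := by
    apply lintegral_lintegral_swap
    have hps : MeasurableSet {q : X × ℝ | ENNReal.ofReal q.2 < Finv (y q.1)} :=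
      measurableSet_lt (ENNReal.measurable_ofReal.comp measurable_snd)
        ((hFinv_meas.comp hy_meas).comp measurable_fst)
    have : (Function.uncurry fun x l =>
        ({l' : ℝ | ENNReal.ofReal l' < Finv (y x)}.indicator 1 l : ℝ≥0∞))
        = {q : X × ℝ | ENNReal.ofReal q.2 < Finv (y q.1)}.indicator 1 := by
      funext q
      simp only [Function.uncurry, indicator_apply, mem_setOf_eq, Pi.one_apply]
    rw [this]
    exact (measurable_one.indicator hps).aemeasurable
  have hsection : ∀ l : ℝ, ∫⁻ x, {l' : ℝ | ENNReal.ofReal l' < Finv (y x)}.indicator 1 l ∂μ'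
      = μ' {x | ENNReal.ofReal l < Finv (y x)} := by
    intro l
    have hms : MeasurableSet {x | ENNReal.ofReal l < Finv (y x)} :=
      measurableSet_lt measurable_const (hFinv_meas.comp hy_meas)
    rw [← lintegral_indicator_one hms]
    refine lintegral_congr fun x => ?_
    simp only [indicator_apply, mem_setOf_eq, Pi.one_apply]
  -- nonnegativity of the spectral measure support
  have hae_nn : 0 ≤ᵐ[ν f] (id : ℝ → ℝ) := by
    refine ae_iff.mpr ?_
    have h : {a : ℝ | ¬ (0:ℝ → ℝ) a ≤ id a} = Iio 0 := by
      ext t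
      simp [not_le]
    rw [h]
    exact hν0 f
  have hE0 : 0 ≤ E := hE ▸ integral_nonneg_of_ae hae_nn
  calc ∫⁻ x, ENNReal.ofReal ((f : X → ℝ) x ^ 2)
      * Finv ((f : X → ℝ) x ^ 2 / (4 * ‖f‖ ^ 2)) ∂μ
      = ∫⁻ l in Ioi (0:ℝ), μ' {x | ENNReal.ofReal l < Finv (y x)} ∂(volume) := by
        rw [hLHS1, hLHS2, hLHS3, hswap]
        exact lintegral_congr hsection
    _ ≤ ∫⁻ l in Ioi (0:ℝ), 4 * ν f (Ioi l) ∂(volume) := by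
        refine lintegral_mono_ae ?_
        filter_upwards [self_mem_ae_restrict measurableSet_Ioi] with l hl
        exact keybound l hl
    _ = 4 * ∫⁻ l in Ioi (0:ℝ), ν f (Ioi l) ∂(volume) := by
        rw [lintegral_const_mul' _ _ (by norm_num)]
    _ = 4 * ∫⁻ t, ENNReal.ofReal t ∂(ν f) := by
        have h := lintegral_eq_lintegral_meas_lt (ν f) hae_nn aemeasurable_id
        simp only [id_eq, Set.Ioi_def] at h
        rw [← h]
    _ = 4 * ENNReal.ofReal E := by
        rw [hE, ofReal_integral_eq_lintegral_ofReal hEfin hae_nn]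
    _ = ENNReal.ofReal (4 * E) := by
        rw [ENNReal.ofReal_mul (by norm_num)]
        norm_num
end

section
/- Let A be a positive self-adjoint operator on L²(X,μ) with F(λ) = ‖χ_A([0,λ])‖_{1,∞} finite. Then every nonzero f ∈ L²(X) ∩ L¹(X) satisfies the Nash-type inequality ‖f‖₂² · F^{-1}(‖f‖₂²/(4‖f‖₁²)) ≤ 8 E(f). -/
open MeasureTheory Set
open scoped ENNReal InnerProductSpace

variable {X : Type*} [MeasurableSpace X]

/-- Hölder with exponents `∞, 1`. -/
lemma holder_top_one (μ : Measure X) (g h : X → ℝ) (hg : eLpNorm g ⊤ μ ≠ ⊤) :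
    ENNReal.ofReal (∫ x, g x * h x ∂μ) ≤ eLpNorm g ⊤ μ * eLpNorm h 1 μ := by
  by_cases hint : Integrable (fun x => g x * h x) μ
  · calc ENNReal.ofReal (∫ x, g x * h x ∂μ)
        ≤ ENNReal.ofReal (∫ x, ‖g x * h x‖ ∂μ) := by
          apply ENNReal.ofReal_le_ofReal
          calc ∫ x, g x * h x ∂μ ≤ |∫ x, g x * h x ∂μ| := le_abs_self _
          _ = ‖∫ x, g x * h x ∂μ‖ := (Real.norm_eq_abs _).symm
          _ ≤ ∫ x, ‖g x * h x‖ ∂μ := norm_integral_le_integral_norm _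
      _ = ∫⁻ x, ‖g x * h x‖₊ ∂μ := ofReal_integral_norm_eq_lintegral_enorm hint
      _ ≤ ∫⁻ x, eLpNorm g ⊤ μ * ‖h x‖₊ ∂μ := by
          refine lintegral_mono_ae ?_
          filter_upwards [ae_le_eLpNormEssSup (f := g) (μ := μ)] with x hx
          rw [nnnorm_mul, ENNReal.coe_mul]
          exact mul_le_mul_left (by rwa [eLpNorm_exponent_top]) _
      _ = eLpNorm g ⊤ μ * ∫⁻ x, ‖h x‖₊ ∂μ := lintegral_const_mul' _ _ hg
      _ = eLpNorm g ⊤ μ * eLpNorm h 1 μ := by rw [eLpNorm_one_eq_lintegral_enorm]; rfl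
  · rw [integral_undef hint]
    simp

/-- The generalized Nash-type inequality (Theorem 2.2, inequality (33)).
The positive self-adjoint operator `A` on `L²(X,μ)` is encoded by its spectral
projections `Pr l = χ_A([0,l])` and the spectral measures `ν g`, with
`ν g ([0,l]) = ⟨Π_{[0,l]} g, g⟩`, `ν g (ℝ) = ‖g‖²`, and energy
`E(g) = ∫ x dν_g`.  With `F(λ) = ‖χ_A([0,λ])‖_{1,∞}` finite and its completed
right-continuous inverse `F⁻¹` (equal to `0` below `F(0)` and to
`sup {λ | F λ ≤ y}` otherwise), every nonzero `f ∈ L²` satisfies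
the Nash-type inequality `‖f‖₂² · F⁻¹(‖f‖₂²/(4‖f‖₁²)) ≤ 8 E(f)`
whenever `f` is a nonzero element of `L² ∩ L¹`. -/
theorem stmt_10 (μ : Measure X)
    (Pr : ℝ → (Lp ℝ 2 μ →L[ℝ] Lp ℝ 2 μ))
    (hproj : ∀ l, Pr l ∘L Pr l = Pr l)
    (hsymm : ∀ l f g, ⟪Pr l f, g⟫_ℝ = ⟪f, Pr l g⟫_ℝ)
    (hmono : ∀ l l', l ≤ l' → Pr l' ∘L Pr l = Pr l)
    (ν : Lp ℝ 2 μ → Measure ℝ)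
    (hν0 : ∀ g, ν g (Set.Iio 0) = 0)
    (hν : ∀ g, ∀ l ≥ (0 : ℝ), ν g (Set.Iic l) = ENNReal.ofReal ⟪Pr l g, g⟫_ℝ)
    (hνtot : ∀ g, ν g Set.univ = ENNReal.ofReal (‖g‖ ^ 2))
    (F : ℝ → ℝ)
    (hF : ∀ l ≥ (0 : ℝ), opNorm1infty μ (Pr l) = ENNReal.ofReal (F l))
    (Finv : ℝ → ℝ≥0∞)
    (hFinv : ∀ y, Finv y = if y < F 0 then 0
      else sSup ((fun l => ENNReal.ofReal l) '' {l | 0 ≤ l ∧ F l ≤ y}))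
    (f : Lp ℝ 2 μ) (hf : f ≠ 0) (hf1 : eLpNorm (⇑f) 1 μ ≠ ⊤)
    (E : ℝ) (hEfin : Integrable (fun x => x) (ν f)) (hE : E = ∫ x, x ∂(ν f)) :
    ENNReal.ofReal (‖f‖ ^ 2)
        * Finv (‖f‖ ^ 2 / (4 * ((eLpNorm (⇑f) 1 μ).toReal) ^ 2))
      ≤ ENNReal.ofReal (8 * E) := by
  set N1 : ℝ≥0∞ := eLpNorm (⇑f) 1 μ with hN1
  set a : ℝ := ‖f‖ ^ 2 with ha
  set y : ℝ := a / (4 * N1.toReal ^ 2) with hy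
  -- positivity facts
  have hN1ne : N1 ≠ 0 := by
    intro h0
    exact hf (Lp.eq_zero_iff_ae_eq_zero.mpr
      ((eLpNorm_eq_zero_iff (Lp.aestronglyMeasurable f) one_ne_zero).mp h0))
  have hn : 0 < N1.toReal := ENNReal.toReal_pos hN1ne hf1
  have hapos : 0 < a := pow_pos (norm_pos_iff.mpr hf) 2
  -- the spectral measure lives on [0, ∞)
  have haepos : ∀ᵐ x ∂(ν f), 0 ≤ x := by
    rw [ae_iff]
    convert hν0 f using 2
    ext x; simp [not_le]
  have hE0 : 0 ≤ E := hE ▸ integral_nonneg_of_ae haepos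
  have hEl : ∫⁻ x, ENNReal.ofReal x ∂(ν f) = ENNReal.ofReal E := by
    rw [hE, ofReal_integral_eq_lintegral_ofReal hEfin haepos]
  rw [hFinv]
  split_ifs with hcase
  · simp
  rw [ENNReal.mul_sSup]
  refine iSup₂_le ?_
  rintro b ⟨l, ⟨hl0, hlF⟩, rfl⟩
  rw [← ENNReal.ofReal_mul hapos.le]
  refine ENNReal.ofReal_le_ofReal ?_
  rcases hl0.eq_or_lt with rfl | hlpos
  · simpa using mul_nonneg (by norm_num : (0:ℝ) ≤ 8) hE0
  -- Step 1 : L¹ → L∞ bound on Pr l applied to f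
  have key1 : eLpNorm (⇑(Pr l f)) ⊤ μ ≤ ENNReal.ofReal (F l) * N1 := by
    set c : ℝ := N1.toReal⁻¹ with hc
    have hcoe : ((‖c‖₊ : ℝ≥0∞)) = N1⁻¹ := by
      rw [← ENNReal.ofReal_coe_nnreal]
      rw [coe_nnnorm, Real.norm_eq_abs, abs_of_pos (by positivity), hc,
        ENNReal.ofReal_inv_of_pos hn, ENNReal.ofReal_toReal hf1]
    have hg1 : eLpNorm (⇑(c • f)) 1 μ ≤ 1 := by
      rw [eLpNorm_congr_ae (Lp.coeFn_smul c f), eLpNorm_const_smul, show ‖c‖ₑ = N1⁻¹ from hcoe]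
      exact le_of_eq (ENNReal.inv_mul_cancel hN1ne hf1)
    have hle : eLpNorm (⇑(Pr l (c • f))) ⊤ μ ≤ opNorm1infty μ (Pr l) :=
      le_iSup₂ (f := fun (g : Lp ℝ 2 μ) (_ : eLpNorm (⇑g) 1 μ ≤ 1) =>
        eLpNorm (⇑(Pr l g)) ⊤ μ) (c • f) hg1
    rw [hF l hl0, _root_.map_smul] at hle
    rw [eLpNorm_congr_ae (Lp.coeFn_smul c (Pr l f)), eLpNorm_const_smul, show ‖c‖ₑ = N1⁻¹ from hcoe] at hle
    have := mul_le_mul_right hle N1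
    rwa [← mul_assoc, ENNReal.mul_inv_cancel hN1ne hf1, one_mul, mul_comm N1 _] at this
  have key1' : eLpNorm (⇑(Pr l f)) ⊤ μ ≠ ⊤ :=
    (lt_of_le_of_lt key1 (ENNReal.mul_lt_top ENNReal.ofReal_lt_top hf1.lt_top)).ne
  -- Step 2 : bound on ν f (Iic l)
  have key2 : ν f (Set.Iic l) ≤ ENNReal.ofReal (a / 4) := by
    rw [hν f l hl0]
    have hinner : ⟪Pr l f, f⟫_ℝ = ∫ x, (Pr l f) x * f x ∂μ := by
      rw [L2.inner_def]
      simp [RCLike.inner_apply, mul_comm]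
    rw [hinner]
    calc ENNReal.ofReal (∫ x, (Pr l f) x * f x ∂μ)
        ≤ eLpNorm (⇑(Pr l f)) ⊤ μ * N1 := holder_top_one μ _ _ key1'
      _ ≤ (ENNReal.ofReal (F l) * N1) * N1 := mul_le_mul_left key1 N1
      _ ≤ (ENNReal.ofReal y * N1) * N1 :=
          mul_le_mul_left (mul_le_mul_left (ENNReal.ofReal_le_ofReal hlF) N1) N1
      _ = ENNReal.ofReal (y * N1.toReal * N1.toReal) := by
          have hy0 : 0 ≤ y := by rw [hy]; positivity
          rw [ENNReal.ofReal_mul (mul_nonneg hy0 hn.le), ENNReal.ofReal_mul hy0,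
            ENNReal.ofReal_toReal hf1]
      _ = ENNReal.ofReal (a / 4) := by
          congr 1
          rw [hy]
          field_simp
  -- Step 3 : lower bound on ν f (Ioi l)
  have key3 : ENNReal.ofReal (3 * a / 4) ≤ ν f (Set.Ioi l) := by
    have htot : ν f (Set.Iic l) + ν f (Set.Ioi l) = ENNReal.ofReal a := by
      rw [← measure_union (Iic_disjoint_Ioi le_rfl) measurableSet_Ioi, Iic_union_Ioi,
        hνtot]
    have hsplit : ENNReal.ofReal (a / 4) + ENNReal.ofReal (3 * a / 4)
        ≤ ENNReal.ofReal (a / 4) + ν f (Set.Ioi l) := by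
      rw [← ENNReal.ofReal_add (by positivity) (by positivity)]
      have : a / 4 + 3 * a / 4 = a := by ring
      rw [this, ← htot]
      exact add_le_add_left key2 _
    exact (ENNReal.add_le_add_iff_left ENNReal.ofReal_ne_top).mp hsplit
  -- Step 4 : Markov inequality
  have key4 : ENNReal.ofReal l * ν f (Set.Ioi l) ≤ ENNReal.ofReal E := by
    calc ENNReal.ofReal l * ν f (Set.Ioi l)
        ≤ ENNReal.ofReal l * ν f {x | ENNReal.ofReal l ≤ ENNReal.ofReal x} := by
          refine mul_le_mul_right (measure_mono ?_) _
          intro x hx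
          exact ENNReal.ofReal_le_ofReal (le_of_lt hx)
      _ ≤ ∫⁻ x, ENNReal.ofReal x ∂(ν f) :=
          mul_meas_ge_le_lintegral₀ ENNReal.measurable_ofReal.aemeasurable _
      _ = ENNReal.ofReal E := hEl
  -- Combine
  have hcomb : ENNReal.ofReal (l * (3 * a / 4)) ≤ ENNReal.ofReal E := by
    rw [ENNReal.ofReal_mul hl0]
    exact le_trans (mul_le_mul_right key3 _) key4
  have hreal : l * (3 * a / 4) ≤ E := by
    have := (ENNReal.ofReal_le_ofReal_iff hE0).mp hcomb
    exact this
  nlinarith [mul_pos hapos hlpos]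
end

section
/- Let A be a positive self-adjoint operator on L²(X,μ) with F(λ) = ‖χ_A([0,λ])‖_{1,∞} finite. If f is a nonzero function of finite energy supported in a domain Ω of finite measure, then 4μ(Ω)·F(8E(f)/‖f‖₂²) ≥ 1. -/
open MeasureTheory Set
open scoped ENNReal InnerProductSpace

variable {X : Type*} [MeasurableSpace X]

/-- Scaling argument: the `(1,∞)` operator norm bounds `T` on any function with
nonzero finite `L¹` norm. -/
lemma opNorm1infty_apply_le (μ : Measure X) (T : Lp ℝ 2 μ →L[ℝ] Lp ℝ 2 μ)
    (f : Lp ℝ 2 μ) (hc0 : eLpNorm (⇑f) 1 μ ≠ 0) (hct : eLpNorm (⇑f) 1 μ ≠ ⊤) :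
    eLpNorm (⇑(T f)) ⊤ μ ≤ opNorm1infty μ T * eLpNorm (⇑f) 1 μ := by
  set c : ℝ≥0∞ := eLpNorm (⇑f) 1 μ with hc
  have hr : 0 < c.toReal := ENNReal.toReal_pos hc0 hct
  set r : ℝ := c.toReal with hrdef
  have hcr : ENNReal.ofReal r = c := ENNReal.ofReal_toReal hct
  have hnn : (‖(r⁻¹ : ℝ)‖₊ : ℝ≥0∞) = c⁻¹ := by
    rw [← enorm_eq_nnnorm, Real.enorm_eq_ofReal (by positivity), ENNReal.ofReal_inv_of_pos hr, hcr]
  set g : Lp ℝ 2 μ := (r⁻¹ : ℝ) • f with hg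
  have hg1 : eLpNorm (⇑g) 1 μ = 1 := by
    calc eLpNorm (⇑g) 1 μ = eLpNorm ((r⁻¹ : ℝ) • ⇑f) 1 μ :=
          eLpNorm_congr_ae (Lp.coeFn_smul _ _)
      _ = ‖(r⁻¹ : ℝ)‖₊ • eLpNorm (⇑f) 1 μ := eLpNorm_const_smul _ _ _ _
      _ = c⁻¹ * c := by rw [ENNReal.smul_def, smul_eq_mul, hnn]
      _ = 1 := ENNReal.inv_mul_cancel hc0 hct
  have hTg : eLpNorm (⇑(T g)) ⊤ μ ≤ opNorm1infty μ T := by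
    rw [opNorm1infty]
    exact le_iSup₂_of_le g hg1.le le_rfl
  have hTgval : eLpNorm (⇑(T g)) ⊤ μ = c⁻¹ * eLpNorm (⇑(T f)) ⊤ μ := by
    have : T g = (r⁻¹ : ℝ) • T f := by rw [hg]; exact T.map_smul _ _
    calc eLpNorm (⇑(T g)) ⊤ μ = eLpNorm ((r⁻¹ : ℝ) • ⇑(T f)) ⊤ μ := by
          rw [this]; exact eLpNorm_congr_ae (Lp.coeFn_smul _ _)
      _ = ‖(r⁻¹ : ℝ)‖₊ • eLpNorm (⇑(T f)) ⊤ μ := eLpNorm_const_smul _ _ _ _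
      _ = c⁻¹ * eLpNorm (⇑(T f)) ⊤ μ := by rw [ENNReal.smul_def, smul_eq_mul, hnn]
  have key : c⁻¹ * eLpNorm (⇑(T f)) ⊤ μ ≤ opNorm1infty μ T := hTgval ▸ hTg
  calc eLpNorm (⇑(T f)) ⊤ μ = c * (c⁻¹ * eLpNorm (⇑(T f)) ⊤ μ) := by
        rw [← mul_assoc, ENNReal.mul_inv_cancel hc0 hct, one_mul]
    _ ≤ c * opNorm1infty μ T := mul_le_mul_right key _
    _ = opNorm1infty μ T * c := mul_comm _ _

/-- The generalized Faber–Krahn inequality / uncertainty principle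
(Theorem 2.2, inequality (34)).
The positive self-adjoint operator `A` on `L²(X,μ)` is encoded by its spectral
projections `Pr l = χ_A([0,l])` and the spectral measures `ν g`, with
`ν g ([0,l]) = ⟨Π_{[0,l]} g, g⟩`, `ν g (ℝ) = ‖g‖²`, and energy
`E(g) = ∫ x dν_g`.  With `F(λ) = ‖χ_A([0,λ])‖_{1,∞}` finite, every nonzero `f ∈ L²` of
finite energy supported in a domain `Ω` of finite measure satisfies
`4 μ(Ω) · F(8 E(f)/‖f‖₂²) ≥ 1`. -/
theorem stmt_12 (μ : Measure X)
    (Pr : ℝ → (Lp ℝ 2 μ →L[ℝ] Lp ℝ 2 μ))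
    (hproj : ∀ l, Pr l ∘L Pr l = Pr l)
    (hsymm : ∀ l f g, ⟪Pr l f, g⟫_ℝ = ⟪f, Pr l g⟫_ℝ)
    (hmono : ∀ l l', l ≤ l' → Pr l' ∘L Pr l = Pr l)
    (ν : Lp ℝ 2 μ → Measure ℝ)
    (hν0 : ∀ g, ν g (Set.Iio 0) = 0)
    (hν : ∀ g, ∀ l ≥ (0 : ℝ), ν g (Set.Iic l) = ENNReal.ofReal ⟪Pr l g, g⟫_ℝ)
    (hνtot : ∀ g, ν g Set.univ = ENNReal.ofReal (‖g‖ ^ 2))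
    (F : ℝ → ℝ)
    (hF : ∀ l ≥ (0 : ℝ), opNorm1infty μ (Pr l) = ENNReal.ofReal (F l))
    (f : Lp ℝ 2 μ) (hf : f ≠ 0)
    (Ω : Set X) (hΩmeas : MeasurableSet Ω) (hΩfin : μ Ω ≠ ⊤)
    (hsupp : ∀ᵐ x ∂μ, x ∉ Ω → (f : X → ℝ) x = 0)
    (E : ℝ) (hEfin : Integrable (fun x => x) (ν f)) (hE : E = ∫ x, x ∂(ν f)) :
    1 ≤ 4 * (μ Ω).toReal * F (8 * E / ‖f‖ ^ 2) := by
  set N : ℝ := ‖f‖ ^ 2 with hNdef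
  have hN : 0 < N := by
    have : 0 < ‖f‖ := norm_pos_iff.mpr hf
    positivity
  -- a.e. nonnegativity of the spectral measure variable
  have haenn : ∀ᵐ x ∂(ν f), 0 ≤ x := by
    rw [ae_iff]
    refine measure_mono_null (fun x hx => ?_) (hν0 f)
    simpa [Set.mem_Iio] using not_le.mp hx
  have hE0 : 0 ≤ E := hE ▸ integral_nonneg_of_ae haenn
  set l : ℝ := 8 * E / N with hldef
  have hl : 0 ≤ l := by positivity
  -- lintegral of ofReal equals ofReal E
  have hlint : ∫⁻ x, ENNReal.ofReal x ∂(ν f) = ENNReal.ofReal E := by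
    rw [hE]; exact (ofReal_integral_eq_lintegral_ofReal hEfin haenn).symm
  -- Chebyshev: ν f (Ioi l) ≤ ofReal (N/8)
  have hIoi : ν f (Set.Ioi l) ≤ ENNReal.ofReal (N / 8) := by
    rcases eq_or_lt_of_le hE0 with hE0' | hEpos
    · -- E = 0, hence l = 0 and ν f (Ioi 0) = 0
      have hl0 : l = 0 := by rw [hldef, ← hE0']; ring
      have h0 : ∫⁻ x, ENNReal.ofReal x ∂(ν f) = 0 := by rw [hlint, ← hE0']; simp
      have hae0 : ∀ᵐ x ∂(ν f), ENNReal.ofReal x = 0 :=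
        (lintegral_eq_zero_iff ENNReal.measurable_ofReal).mp h0
      have : ν f (Set.Ioi l) = 0 := by
        rw [hl0, ae_iff] at *
        refine measure_mono_null (fun x hx => ?_) hae0
        have hx' : (0:ℝ) < x := hx
        simpa using (ENNReal.ofReal_pos.mpr hx').ne'
      simp [this]
    · -- E > 0, Markov inequality
      have hlpos : 0 < l := by rw [hldef]; positivity
      have hmarkov := mul_meas_ge_le_lintegral₀
        (μ := ν f) ENNReal.measurable_ofReal.aemeasurable (ENNReal.ofReal l)
      rw [hlint] at hmarkov
      have hsub : Set.Ioi l ⊆ {x : ℝ | ENNReal.ofReal l ≤ ENNReal.ofReal x} :=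
        fun x hx => ENNReal.ofReal_le_ofReal (le_of_lt hx)
      have h1 : ENNReal.ofReal l * ν f (Set.Ioi l) ≤ ENNReal.ofReal E :=
        le_trans (mul_le_mul_right (measure_mono hsub) _) hmarkov
      have hl0 : ENNReal.ofReal l ≠ 0 := (ENNReal.ofReal_pos.mpr hlpos).ne'
      have h2 : ν f (Set.Ioi l) ≤ ENNReal.ofReal E / ENNReal.ofReal l :=
        (ENNReal.le_div_iff_mul_le (Or.inl hl0) (Or.inl ENNReal.ofReal_ne_top)).mpr
          (by rwa [mul_comm])
      have h3 : ENNReal.ofReal E / ENNReal.ofReal l = ENNReal.ofReal (N / 8) := by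
        rw [← ENNReal.ofReal_div_of_pos hlpos]
        congr 1
        rw [hldef]
        field_simp
      rwa [h3] at h2
  -- lower bound on ν f (Iic l)
  have hIic : ENNReal.ofReal (7 * N / 8) ≤ ν f (Set.Iic l) := by
    have hcover : ν f Set.univ ≤ ν f (Set.Iic l) + ν f (Set.Ioi l) := by
      rw [← Set.Iic_union_Ioi (a := l)]
      exact measure_union_le _ _
    rw [hνtot f] at hcover
    have hsplit : ENNReal.ofReal N = ENNReal.ofReal (7 * N / 8) + ENNReal.ofReal (N / 8) := by
      rw [← ENNReal.ofReal_add (by positivity) (by positivity)]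
      congr 1; ring
    have : ENNReal.ofReal (7 * N / 8) + ENNReal.ofReal (N / 8)
        ≤ ν f (Set.Iic l) + ENNReal.ofReal (N / 8) := by
      rw [← hsplit]
      exact hcover.trans (add_le_add_right hIoi _)
    exact ENNReal.add_le_add_iff_right ENNReal.ofReal_ne_top |>.mp this
  -- rewrite via the spectral projection
  rw [hν f l hl] at hIic
  set g : Lp ℝ 2 μ := Pr l f with hgdef
  -- facts about eLpNorm f 1
  have hfne : ¬ (⇑f =ᵐ[μ] 0) := fun h => hf (Lp.eq_zero_iff_ae_eq_zero.mpr h)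
  have hc0 : eLpNorm (⇑f) 1 μ ≠ 0 := by
    intro h
    exact hfne ((eLpNorm_eq_zero_iff (Lp.aestronglyMeasurable f) one_ne_zero).mp h)
  have hf2 : eLpNorm (⇑f) 2 μ = ENNReal.ofReal ‖f‖ := by
    rw [Lp.norm_def, ENNReal.ofReal_toReal (Lp.eLpNorm_ne_top f)]
  -- L¹ bound via Cauchy–Schwarz on Ω
  have hind : ⇑f =ᵐ[μ] Ω.indicator ⇑f := by
    filter_upwards [hsupp] with x hx
    by_cases hxΩ : x ∈ Ω
    · simp [Set.indicator, hxΩ]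
    · simp [Set.indicator, hxΩ, hx hxΩ]
  have hL1 : eLpNorm (⇑f) 1 μ ≤ μ Ω ^ (1/2 : ℝ) * ENNReal.ofReal ‖f‖ := by
    calc eLpNorm (⇑f) 1 μ = eLpNorm (Ω.indicator ⇑f) 1 μ := eLpNorm_congr_ae hind
      _ = eLpNorm (⇑f) 1 (μ.restrict Ω) := eLpNorm_indicator_eq_eLpNorm_restrict hΩmeas
      _ ≤ eLpNorm (⇑f) 2 (μ.restrict Ω) * (μ.restrict Ω) Set.univ ^
            (1 / (1:ℝ≥0∞).toReal - 1 / (2:ℝ≥0∞).toReal) :=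
          eLpNorm_le_eLpNorm_mul_rpow_measure_univ (by norm_num)
            ((Lp.aestronglyMeasurable f).restrict)
      _ = eLpNorm (⇑f) 2 (μ.restrict Ω) * μ Ω ^ (1/2 : ℝ) := by
          rw [Measure.restrict_apply_univ]
          norm_num
      _ ≤ eLpNorm (⇑f) 2 μ * μ Ω ^ (1/2 : ℝ) :=
          mul_le_mul_left (eLpNorm_mono_measure _ Measure.restrict_le_self) _
      _ = μ Ω ^ (1/2 : ℝ) * ENNReal.ofReal ‖f‖ := by rw [hf2, mul_comm]
  have hΩ0 : μ Ω ≠ 0 := by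
    intro h
    apply hc0
    refine le_antisymm ?_ zero_le
    calc eLpNorm (⇑f) 1 μ ≤ μ Ω ^ (1/2 : ℝ) * ENNReal.ofReal ‖f‖ := hL1
      _ = 0 := by rw [h, ENNReal.zero_rpow_of_pos (by norm_num), zero_mul]
  have hct : eLpNorm (⇑f) 1 μ ≠ ⊤ := by
    intro h
    rw [h] at hL1
    exact (ENNReal.mul_ne_top (ENNReal.rpow_ne_top_of_nonneg (by norm_num) hΩfin)
      ENNReal.ofReal_ne_top) (top_le_iff.mp hL1)
  -- inner product upper bound
  have hinner_int : Integrable (fun x => (g : X → ℝ) x * (f : X → ℝ) x) μ := by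
    have := MeasureTheory.L2.integrable_inner (𝕜 := ℝ) g f
    simpa [RCLike.inner_apply, mul_comm] using this
  have hinner_eq : ⟪g, f⟫_ℝ = ∫ x, (g : X → ℝ) x * (f : X → ℝ) x ∂μ := by
    rw [MeasureTheory.L2.inner_def]; simp [RCLike.inner_apply, mul_comm]
  have hprod_le : eLpNorm (fun x => (g : X → ℝ) x * (f : X → ℝ) x) 1 μ
      ≤ eLpNorm (⇑g) ⊤ μ * eLpNorm (⇑f) 1 μ := by
    have := eLpNorm_smul_le_eLpNorm_top_mul_eLpNorm (𝕜 := ℝ) (E := ℝ) (μ := μ)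
      (f := ⇑f) 1 (Lp.aestronglyMeasurable f) (⇑g)
    simpa [Pi.smul_apply', smul_eq_mul, Pi.mul_def] using this
  have hmain : ENNReal.ofReal ⟪g, f⟫_ℝ ≤ eLpNorm (⇑g) ⊤ μ * eLpNorm (⇑f) 1 μ := by
    calc ENNReal.ofReal ⟪g, f⟫_ℝ
        ≤ ENNReal.ofReal (∫ x, ‖(g : X → ℝ) x * (f : X → ℝ) x‖ ∂μ) := by
          apply ENNReal.ofReal_le_ofReal
          rw [hinner_eq]
          calc ∫ x, (g : X → ℝ) x * (f : X → ℝ) x ∂μ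
              ≤ ‖∫ x, (g : X → ℝ) x * (f : X → ℝ) x ∂μ‖ := le_abs_self _
            _ ≤ ∫ x, ‖(g : X → ℝ) x * (f : X → ℝ) x‖ ∂μ :=
                norm_integral_le_integral_norm _
      _ = ∫⁻ x, ‖(g : X → ℝ) x * (f : X → ℝ) x‖₊ ∂μ :=
          ofReal_integral_norm_eq_lintegral_enorm hinner_int
      _ = eLpNorm (fun x => (g : X → ℝ) x * (f : X → ℝ) x) 1 μ :=
          (eLpNorm_one_eq_lintegral_enorm (f := fun x => (g : X → ℝ) x * (f : X → ℝ) x)).symm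
      _ ≤ eLpNorm (⇑g) ⊤ μ * eLpNorm (⇑f) 1 μ := hprod_le
  -- operator norm bound
  have hop : eLpNorm (⇑g) ⊤ μ ≤ ENNReal.ofReal (F l) * eLpNorm (⇑f) 1 μ := by
    rw [← hF l hl]
    exact opNorm1infty_apply_le μ (Pr l) f hc0 hct
  -- full ENNReal chain
  have hsq : (μ Ω ^ (1/2 : ℝ) * ENNReal.ofReal ‖f‖) * (μ Ω ^ (1/2 : ℝ) * ENNReal.ofReal ‖f‖)
      = μ Ω * ENNReal.ofReal N := by
    have h12 : μ Ω ^ (1/2 : ℝ) * μ Ω ^ (1/2 : ℝ) = μ Ω := by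
      rw [← ENNReal.rpow_add _ _ hΩ0 hΩfin]
      norm_num
    rw [hNdef, sq, ENNReal.ofReal_mul (norm_nonneg f)]
    calc (μ Ω ^ (1/2 : ℝ) * ENNReal.ofReal ‖f‖) * (μ Ω ^ (1/2 : ℝ) * ENNReal.ofReal ‖f‖)
        = (μ Ω ^ (1/2 : ℝ) * μ Ω ^ (1/2 : ℝ)) * (ENNReal.ofReal ‖f‖ * ENNReal.ofReal ‖f‖) := by
          ring
      _ = μ Ω * (ENNReal.ofReal ‖f‖ * ENNReal.ofReal ‖f‖) := by rw [h12]
  have hchain : ENNReal.ofReal (7 * N / 8)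
      ≤ ENNReal.ofReal (F l) * (μ Ω * ENNReal.ofReal N) := by
    calc ENNReal.ofReal (7 * N / 8) ≤ ENNReal.ofReal ⟪g, f⟫_ℝ := hIic
      _ ≤ eLpNorm (⇑g) ⊤ μ * eLpNorm (⇑f) 1 μ := hmain
      _ ≤ (ENNReal.ofReal (F l) * eLpNorm (⇑f) 1 μ) * eLpNorm (⇑f) 1 μ :=
          mul_le_mul_left hop _
      _ = ENNReal.ofReal (F l) * (eLpNorm (⇑f) 1 μ * eLpNorm (⇑f) 1 μ) := by ring
      _ ≤ ENNReal.ofReal (F l) * ((μ Ω ^ (1/2 : ℝ) * ENNReal.ofReal ‖f‖) *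
            (μ Ω ^ (1/2 : ℝ) * ENNReal.ofReal ‖f‖)) := by
          exact mul_le_mul_right (mul_le_mul' hL1 hL1) _
      _ = ENNReal.ofReal (F l) * (μ Ω * ENNReal.ofReal N) := by rw [hsq]
  -- F l must be positive
  have hFpos : 0 < F l := by
    by_contra hFle
    push_neg at hFle
    rw [ENNReal.ofReal_eq_zero.mpr hFle, zero_mul] at hchain
    have : (7 : ℝ) * N / 8 ≤ 0 := ENNReal.ofReal_eq_zero.mp (le_antisymm hchain zero_le)
    nlinarith
  -- pass to reals
  have hfin : ENNReal.ofReal (F l) * (μ Ω * ENNReal.ofReal N) ≠ ⊤ :=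
    ENNReal.mul_ne_top ENNReal.ofReal_ne_top (ENNReal.mul_ne_top hΩfin ENNReal.ofReal_ne_top)
  have hreal := ENNReal.toReal_mono hfin hchain
  rw [ENNReal.toReal_ofReal (by positivity), ENNReal.toReal_mul, ENNReal.toReal_mul,
    ENNReal.toReal_ofReal hFpos.le, ENNReal.toReal_ofReal hN.le] at hreal
  -- conclude
  have hΩpos : 0 ≤ (μ Ω).toReal := ENNReal.toReal_nonneg
  have h78 : 7 / 8 ≤ F l * (μ Ω).toReal := by
    have := hreal
    nlinarith
  nlinarith
end

section
/- Let F : (0,∞) → [0,∞) be increasing with F(2λ) ≥ 2(1+ε)F(λ) for some ε > 0 and all small λ, and let G(λ) = λ^{-1}F(λ) + ∫₀^λ u^{-2}F(u)du. Then F(λ) ≤ λG(λ) ≤ (2 + ε^{-1})F(λ) for small λ. -/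
open MeasureTheory Set

/-- If `F` is increasing on `(0,∞)`, nonnegative, and satisfies the growth condition
`F(2λ) ≥ 2(1+ε)F(λ)` for small `λ`, and `G(λ) = λ⁻¹F(λ) + ∫₀^λ u⁻²F(u) du`
(assumed convergent), then `F(λ) ≤ λ G(λ) ≤ (2 + ε⁻¹) F(λ)` for small `λ`. -/
theorem stmt_15 (F : ℝ → ℝ) (hmono : MonotoneOn F (Set.Ioi (0 : ℝ)))
    (hF0 : ∀ l > (0 : ℝ), 0 ≤ F l)
    (ε δ : ℝ) (hε : 0 < ε) (hδ : 0 < δ)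
    (hgrowth : ∀ l, 0 < l → l ≤ δ → 2 * (1 + ε) * F l ≤ F (2 * l))
    (hconv : IntegrableOn (fun u => F u / u ^ 2) (Set.Ioc (0 : ℝ) δ))
    (G : ℝ → ℝ)
    (hG : ∀ l > (0 : ℝ), G l = l⁻¹ * F l + ∫ u in Set.Ioc (0 : ℝ) l, F u / u ^ 2) :
    ∀ l, 0 < l → l ≤ δ → F l ≤ l * G l ∧ l * G l ≤ (2 + ε⁻¹) * F l := by
  intro l hl hlδ
  have hFl0 : 0 ≤ F l := hF0 l hl
  have hlne : l ≠ 0 := ne_of_gt hl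
  have hone : (1:ℝ) ≤ 2 := by norm_num
  have hpow_le : ∀ n : ℕ, l / 2 ^ n ≤ l := fun n =>
    div_le_self hl.le (one_le_pow₀ hone)
  -- iterated growth: (2(1+ε))^n F(l/2^n) ≤ F l
  have hiter : ∀ n : ℕ, (2 * (1 + ε)) ^ n * F (l / 2 ^ n) ≤ F l := by
    intro n
    induction n with
    | zero => simp
    | succ n ih =>
      have hl2 : 0 < l / 2 ^ (n + 1) := by positivity
      have hl2δ : l / 2 ^ (n + 1) ≤ δ := le_trans (hpow_le (n+1)) hlδ
      have hgr := hgrowth (l / 2 ^ (n + 1)) hl2 hl2δ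
      have h2 : 2 * (l / 2 ^ (n + 1)) = l / 2 ^ n := by
        rw [pow_succ]; field_simp
      rw [h2] at hgr
      have hpos : (0:ℝ) ≤ (2 * (1 + ε)) ^ n := by positivity
      calc (2 * (1 + ε)) ^ (n + 1) * F (l / 2 ^ (n + 1))
          = (2 * (1 + ε)) ^ n * (2 * (1 + ε) * F (l / 2 ^ (n + 1))) := by ring
        _ ≤ (2 * (1 + ε)) ^ n * F (l / 2 ^ n) := mul_le_mul_of_nonneg_left hgr hpos
        _ ≤ F l := ih
  -- integrability on subintervals
  have hintF : ∀ a b : ℝ, 0 < a → b ≤ l → IntegrableOn (fun u => F u / u ^ 2) (Ioc a b) := by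
    intro a b ha hb
    exact hconv.mono_set (Set.Ioc_subset_Ioc ha.le (hb.trans hlδ))
  -- strip bound
  have hstrip : ∀ n : ℕ, (∫ u in Ioc (l / 2 ^ (n+1)) (l / 2 ^ n), F u / u ^ 2)
      ≤ F l / l * ((1 + ε)⁻¹) ^ n := by
    intro n
    set a := l / 2 ^ (n+1) with ha_def
    set b := l / 2 ^ n with hb_def
    have ha : 0 < a := by positivity
    have hb : 0 < b := by positivity
    have hab : a ≤ b := by
      apply div_le_div_of_nonneg_left hl.le (by positivity)
      exact pow_le_pow_right₀ hone (Nat.le_succ n)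
    have hbl : b ≤ l := hpow_le n
    have hgcont : ContinuousOn (fun u : ℝ => F b / u ^ 2) (Icc a b) := by
      apply ContinuousOn.div continuousOn_const (continuousOn_pow 2)
      intro x hx
      exact pow_ne_zero 2 (ne_of_gt (lt_of_lt_of_le ha hx.1))
    have hgint : IntegrableOn (fun u : ℝ => F b / u ^ 2) (Ioc a b) :=
      (hgcont.integrableOn_compact isCompact_Icc).mono_set Ioc_subset_Icc_self
    have hmono' : (∫ u in Ioc a b, F u / u ^ 2) ≤ ∫ u in Ioc a b, F b / u ^ 2 := by
      apply setIntegral_mono_on (hintF a b ha hbl) hgint measurableSet_Ioc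
      intro x hx
      have hx0 : 0 < x := lt_of_lt_of_le ha hx.1.le
      exact div_le_div_of_nonneg_right (hmono hx0 hb hx.2) (by positivity)
    have hval : (∫ u in Ioc a b, F b / u ^ 2) = F b * (a⁻¹ - b⁻¹) := by
      rw [← intervalIntegral.integral_of_le hab]
      have heq : ∀ x : ℝ, F b / x ^ 2 = F b * x ^ (-2 : ℤ) := by
        intro x
        rw [zpow_neg, div_eq_mul_inv]
        norm_num
      simp_rw [heq]
      rw [intervalIntegral.integral_const_mul, integral_zpow]
      · norm_num
        left
        ring
      · refine Or.inr ⟨by norm_num, ?_⟩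
        rw [Set.uIcc_of_le hab]
        intro h
        exact absurd h.1 (not_le.mpr ha)
    have hFb : F b * (a⁻¹ - b⁻¹) ≤ F l / l * ((1 + ε)⁻¹) ^ n := by
      have hdiff : a⁻¹ - b⁻¹ = 2 ^ n / l := by
        rw [ha_def, hb_def, pow_succ]
        field_simp
        ring
      rw [hdiff]
      have hFbound : F b ≤ F l / (2 * (1 + ε)) ^ n := by
        rw [le_div_iff₀ (by positivity)]
        linarith [hiter n]
      calc F b * (2 ^ n / l) ≤ (F l / (2 * (1 + ε)) ^ n) * (2 ^ n / l) :=
            mul_le_mul_of_nonneg_right hFbound (by positivity)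
        _ = F l / l * ((1 + ε)⁻¹) ^ n := by
            rw [mul_pow, inv_pow]
            have h1 : ((2:ℝ) ^ n) ≠ 0 := by positivity
            have h2 : ((1 + ε) ^ n : ℝ) ≠ 0 := by positivity
            field_simp
    linarith [hmono', hval.le, hFb]
  -- tail integral bound by induction
  have hsum : ∀ n : ℕ, (∫ u in Ioc (l / 2 ^ n) l, F u / u ^ 2)
      ≤ F l / l * ∑ k ∈ Finset.range n, ((1 + ε)⁻¹) ^ k := by
    intro n
    induction n with
    | zero => simp
    | succ n ih =>
      have ha : (0:ℝ) < l / 2 ^ (n+1) := by positivity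
      have hab : l / 2 ^ (n+1) ≤ l / 2 ^ n := by
        apply div_le_div_of_nonneg_left hl.le (by positivity)
        exact pow_le_pow_right₀ hone (Nat.le_succ n)
      have hbl : l / 2 ^ n ≤ l := hpow_le n
      have hsplit : Ioc (l / 2 ^ (n+1)) l
          = Ioc (l / 2 ^ (n+1)) (l / 2 ^ n) ∪ Ioc (l / 2 ^ n) l :=
        (Set.Ioc_union_Ioc_eq_Ioc hab hbl).symm
      rw [hsplit, setIntegral_union (Set.Ioc_disjoint_Ioc_of_le le_rfl) measurableSet_Ioc
        (hintF _ _ ha hbl) (hintF _ _ (by positivity) le_rfl)]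
      rw [Finset.sum_range_succ, mul_add]
      have := hstrip n
      linarith [ih]
  -- geometric sum bound
  have hr0 : (0:ℝ) ≤ (1 + ε)⁻¹ := by positivity
  have hr1 : (1 + ε)⁻¹ < 1 := by
    rw [inv_lt_one_iff₀]
    right
    linarith
  have hgeom : ∀ n : ℕ, (∑ k ∈ Finset.range n, ((1 + ε)⁻¹) ^ k) ≤ 1 + ε⁻¹ := by
    intro n
    have hsummable := summable_geometric_of_lt_one hr0 hr1
    have := Summable.sum_le_tsum (Finset.range n) (fun i _ => pow_nonneg hr0 i) hsummable
    rw [tsum_geometric_of_lt_one hr0 hr1] at this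
    have heq : (1 - (1 + ε)⁻¹)⁻¹ = 1 + ε⁻¹ := by
      rw [inv_eq_iff_eq_inv]
      field_simp
      ring
    linarith [this, heq.le]
  -- limit: the full integral is bounded
  have hC : ∀ n : ℕ, (∫ u in Ioc (l / 2 ^ n) l, F u / u ^ 2) ≤ F l / l * (1 + ε⁻¹) := by
    intro n
    refine (hsum n).trans ?_
    exact mul_le_mul_of_nonneg_left (hgeom n) (by positivity)
  have hunion : (⋃ n : ℕ, Ioc (l / 2 ^ n) l) = Ioc (0:ℝ) l := by
    ext x
    simp only [mem_iUnion, mem_Ioc]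
    constructor
    · rintro ⟨n, h1, h2⟩
      exact ⟨lt_trans (by positivity) h1, h2⟩
    · rintro ⟨hx0, hxl⟩
      obtain ⟨n, hn⟩ := exists_pow_lt_of_lt_one (div_pos hx0 hl)
        (by norm_num : (1:ℝ)/2 < 1)
      refine ⟨n, ?_, hxl⟩
      have h1 : l / 2 ^ n = l * (1/2) ^ n := by
        rw [div_pow, one_pow]
        ring
      rw [h1]
      calc l * (1/2) ^ n < l * (x / l) := by
            exact mul_lt_mul_of_pos_left hn hl
        _ = x := by field_simp
  have hmonoS : Monotone (fun n : ℕ => Ioc (l / 2 ^ n) l) := by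
    intro m n hmn
    apply Set.Ioc_subset_Ioc_left
    apply div_le_div_of_nonneg_left hl.le (by positivity)
    exact pow_le_pow_right₀ hone hmn
  have hintU : IntegrableOn (fun u => F u / u ^ 2) (⋃ n : ℕ, Ioc (l / 2 ^ n) l) := by
    rw [hunion]
    exact hconv.mono_set (Set.Ioc_subset_Ioc le_rfl hlδ)
  have htends := MeasureTheory.tendsto_setIntegral_of_monotone
    (fun n => measurableSet_Ioc) hmonoS hintU
  rw [hunion] at htends
  have hIbound : (∫ u in Ioc (0:ℝ) l, F u / u ^ 2) ≤ F l / l * (1 + ε⁻¹) :=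
    le_of_tendsto htends (Filter.Eventually.of_forall hC)
  have hInn : 0 ≤ ∫ u in Ioc (0:ℝ) l, F u / u ^ 2 := by
    apply setIntegral_nonneg measurableSet_Ioc
    intro x hx
    exact div_nonneg (hF0 x hx.1) (sq_nonneg x)
  have hGl : l * G l = F l + l * ∫ u in Ioc (0:ℝ) l, F u / u ^ 2 := by
    rw [hG l hl, mul_add, ← mul_assoc, mul_inv_cancel₀ hlne, one_mul]
  constructor
  · rw [hGl]
    nlinarith [hInn, hl]
  · rw [hGl]
    have : l * (∫ u in Ioc (0:ℝ) l, F u / u ^ 2) ≤ l * (F l / l * (1 + ε⁻¹)) :=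
      mul_le_mul_of_nonneg_left hIbound hl.le
    have heq : l * (F l / l * (1 + ε⁻¹)) = F l * (1 + ε⁻¹) := by
      field_simp
    nlinarith [this, heq.le]
end

section
/- Let H be a finite-dimensional Hilbert space of dimension d and P a positive bounded operator on L²(X,H). Then ‖P‖_{1,∞} ≤ D(P) ≤ d·‖P‖_{1,∞}, where D(P) = esssup_x Dν_P(x) is the density of P and ‖P‖_{1,∞} its L¹→L^∞ operator norm (with ‖f‖_∞ = sup_x ‖f(x)‖_H, ‖f‖₁ = ∫‖f(x)‖_H dμ). -/
open MeasureTheory Set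
open scoped ENNReal InnerProductSpace

section Stmt17Aux
open Filter Topology

namespace Stmt17
variable {X : Type*} [MeasurableSpace X] {μ : Measure X}
  {H : Type*} [NormedAddCommGroup H] [InnerProductSpace ℝ H]

set_option linter.unusedSectionVars false

lemma pairing (f g : Lp H 2 μ) :
    ENNReal.ofReal ⟪f, g⟫_ℝ ≤ eLpNorm (⇑f) ⊤ μ * eLpNorm (⇑g) 1 μ := by
  rw [MeasureTheory.L2.inner_def, eLpNorm_exponent_top, eLpNorm_one_eq_lintegral_enorm]
  calc ENNReal.ofReal (∫ a, ⟪(f : X → H) a, (g : X → H) a⟫_ℝ ∂μ)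
      ≤ (‖∫ a, ⟪(f : X → H) a, (g : X → H) a⟫_ℝ ∂μ‖₊ : ℝ≥0∞) := Real.ofReal_le_enorm _
    _ ≤ ∫⁻ a, ‖⟪(f : X → H) a, (g : X → H) a⟫_ℝ‖₊ ∂μ := enorm_integral_le_lintegral_enorm _
    _ ≤ ∫⁻ a, (‖(f : X → H) a‖₊ : ℝ≥0∞) * ‖(g : X → H) a‖₊ ∂μ := by
        refine lintegral_mono fun a => ?_
        rw [← ENNReal.coe_mul]
        exact ENNReal.coe_le_coe.mpr (nnnorm_inner_le_nnnorm (𝕜 := ℝ) _ _)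
    _ ≤ ∫⁻ a, eLpNormEssSup (⇑f) μ * ‖(g : X → H) a‖₊ ∂μ := by
        refine lintegral_mono_ae ?_
        filter_upwards [ae_le_eLpNormEssSup (f := ⇑f) (μ := μ)] with a ha
        exact mul_le_mul_left ha _
    _ = eLpNormEssSup (⇑f) μ * ∫⁻ a, ‖(g : X → H) a‖₊ ∂μ :=
        lintegral_const_mul'' _ (Lp.aestronglyMeasurable g).enorm

noncomputable def opN (μ : Measure X) (P : Lp H 2 μ →L[ℝ] Lp H 2 μ) : ℝ≥0∞ :=
  ⨆ (f : Lp H 2 μ) (_ : eLpNorm (⇑f) 1 μ ≤ 1), eLpNorm (⇑(P f)) ⊤ μ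

lemma le_opN (P : Lp H 2 μ →L[ℝ] Lp H 2 μ) (h : Lp H 2 μ)
    (hfin : eLpNorm (⇑h) 1 μ ≠ ∞) :
    eLpNorm (⇑(P h)) ⊤ μ ≤ opN μ P * eLpNorm (⇑h) 1 μ := by
  rcases eq_or_ne (eLpNorm (⇑h) 1 μ) 0 with h0 | h0
  · have : (⇑h : X → H) =ᵐ[μ] 0 := by
      simpa [eLpNorm_eq_zero_iff (Lp.aestronglyMeasurable h) one_ne_zero] using h0
    have hh : h = 0 := by
      ext; exact this.trans (Lp.coeFn_zero H 2 μ).symm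
    have h1 : eLpNorm (⇑(0 : Lp H 2 μ)) ⊤ μ = 0 := by
      rw [eLpNorm_congr_ae (Lp.coeFn_zero H 2 μ)]; simp
    rw [hh, map_zero, h1]
    exact zero_le
  · set r : ℝ := (eLpNorm (⇑h) 1 μ).toReal with hr
    have hrpos : 0 < r := ENNReal.toReal_pos h0 hfin
    have hofr : ENNReal.ofReal r = eLpNorm (⇑h) 1 μ := ENNReal.ofReal_toReal hfin
    set g : Lp H 2 μ := r⁻¹ • h with hg
    have hg1 : eLpNorm (⇑g) 1 μ ≤ 1 := by
      have := eLpNorm_congr_ae (Lp.coeFn_smul r⁻¹ h) (p := 1) (μ := μ)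
      rw [hg, this, eLpNorm_const_smul]
      rw [← hofr]
      have : (‖r⁻¹‖₊ : ℝ≥0∞) = ENNReal.ofReal r⁻¹ := by
        rw [← ENNReal.ofReal_coe_nnreal]
        congr 1
        simp [Real.nnnorm_of_nonneg (inv_nonneg.2 hrpos.le)]
      rw [enorm_eq_nnnorm, this, ← ENNReal.ofReal_mul (inv_nonneg.2 hrpos.le),
        inv_mul_cancel₀ hrpos.ne']
      simp
    have hPg : eLpNorm (⇑(P g)) ⊤ μ ≤ opN μ P := by
      exact le_iSup₂ (f := fun (u : Lp H 2 μ) (_ : eLpNorm (⇑u) 1 μ ≤ 1) =>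
        eLpNorm (⇑(P u)) ⊤ μ) g hg1
    have hPh : P h = r • P g := by
      rw [hg, _root_.map_smul, smul_smul, mul_inv_cancel₀ hrpos.ne', one_smul]
    calc eLpNorm (⇑(P h)) ⊤ μ = eLpNorm (⇑(r • P g)) ⊤ μ := by rw [hPh]
      _ = (‖r‖₊ : ℝ≥0∞) * eLpNorm (⇑(P g)) ⊤ μ := by
          rw [eLpNorm_congr_ae (Lp.coeFn_smul r (P g)), eLpNorm_const_smul, enorm_eq_nnnorm]
      _ ≤ ENNReal.ofReal r * opN μ P := by
          have he : (‖r‖₊ : ℝ≥0∞) = ENNReal.ofReal r := by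
            rw [← ENNReal.ofReal_coe_nnreal]
            congr 1
            simp [Real.nnnorm_of_nonneg hrpos.le]
          rw [he]
          exact mul_le_mul_right hPg _
      _ = opN μ P * eLpNorm (⇑h) 1 μ := by rw [hofr, mul_comm]

lemma dual [SigmaFinite μ] (u : Lp H 2 μ) (C : ℝ≥0∞)
    (hC : ∀ h : Lp H 2 μ, eLpNorm (⇑h) 1 μ < ∞ →
      ENNReal.ofReal ⟪u, h⟫_ℝ ≤ C * eLpNorm (⇑h) 1 μ) :
    eLpNormEssSup (⇑u) μ ≤ C := by
  by_contra hlt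
  push_neg at hlt
  obtain ⟨C', hCC', hC'e⟩ := exists_between hlt
  have hC'top : C' ≠ ∞ := hC'e.ne_top
  have hC'pos : 0 < C' := lt_of_le_of_lt zero_le hCC'
  -- the set where the norm exceeds C'
  have hum : StronglyMeasurable (⇑u : X → H) := (u : X →ₘ[μ] H).stronglyMeasurable
  set A : Set X := {x | C' < (‖(u : X → H) x‖₊ : ℝ≥0∞)} with hA
  have hAmeas : MeasurableSet A := by
    have : Measurable fun x => (‖(u : X → H) x‖₊ : ℝ≥0∞) := hum.enorm
    exact this measurableSet_Ioi
  have hApos : 0 < μ A := by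
    rcases eq_or_ne (μ A) 0 with h0 | h0
    · exfalso
      have hae : ∀ᵐ x ∂μ, (‖(u : X → H) x‖₊ : ℝ≥0∞) ≤ C' := by
        rw [ae_iff]
        simpa [hA, not_le] using h0
      have : eLpNormEssSup (⇑u) μ ≤ C' := essSup_le_of_ae_le _ hae
      exact absurd (lt_of_le_of_lt this hC'e) (lt_irrefl _)
    · exact pos_iff_ne_zero.mpr h0
  obtain ⟨B, hBmeas, hBA, hBpos, hBfin⟩ := Measure.exists_subset_measure_lt_top hAmeas hApos
  -- test function
  set h₀ : X → H := B.indicator (fun x => ‖(u : X → H) x‖⁻¹ • (u : X → H) x) with hh₀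
  have hh₀sm : StronglyMeasurable h₀ :=
    (((hum.norm.measurable.inv).stronglyMeasurable.smul hum)).indicator hBmeas
  have hh₀bd : ∀ x, ‖h₀ x‖ ≤ B.indicator (fun _ => (1:ℝ)) x := by
    intro x
    rw [hh₀]
    by_cases hx : x ∈ B
    · simp only [Set.indicator_of_mem hx]
      rw [norm_smul, norm_inv, norm_norm]
      rcases eq_or_ne ((u : X → H) x) 0 with h | h
      · simp [h]
      · rw [inv_mul_cancel₀ (norm_ne_zero_iff.2 h)]
    · simp [Set.indicator_of_notMem hx]
  have hmem2 : MemLp h₀ 2 μ := by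
    refine ⟨hh₀sm.aestronglyMeasurable, ?_⟩
    calc eLpNorm h₀ 2 μ ≤ eLpNorm (B.indicator fun _ => (1:ℝ)) 2 μ :=
          eLpNorm_mono fun x => by
            rw [Real.norm_eq_abs]; exact (hh₀bd x).trans (le_abs_self _)
      _ < ∞ := by
          rw [eLpNorm_indicator_const hBmeas (by norm_num) (by norm_num)]
          simp only [enorm_one, one_mul]
          exact ENNReal.rpow_lt_top_of_nonneg (by norm_num) hBfin.ne
  set h : Lp H 2 μ := hmem2.toLp h₀ with hh
  have hcoe : ⇑h =ᵐ[μ] h₀ := hmem2.coeFn_toLp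
  -- L¹ norm of h
  have hnorm1 : eLpNorm (⇑h) 1 μ ≤ μ B := by
    rw [eLpNorm_congr_ae hcoe, eLpNorm_one_eq_lintegral_enorm]
    calc ∫⁻ x, (‖h₀ x‖₊ : ℝ≥0∞) ∂μ ≤ ∫⁻ x, B.indicator (fun _ => (1:ℝ≥0∞)) x ∂μ := by
          refine lintegral_mono fun x => ?_
          have := hh₀bd x
          by_cases hx : x ∈ B
          · simp only [Set.indicator_of_mem hx] at this ⊢
            exact ENNReal.coe_le_one_iff.2 (by rw [← NNReal.coe_le_coe]; simpa using this)
          · simp only [Set.indicator_of_notMem hx] at this ⊢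
            have : h₀ x = 0 := by
              rw [hh₀, Set.indicator_of_notMem hx]
            simp [this]
      _ = μ B := by rw [lintegral_indicator hBmeas]; simp
  have h1fin : eLpNorm (⇑h) 1 μ < ∞ := lt_of_le_of_lt hnorm1 hBfin
  -- inner product from below
  have hinner : C' * μ B ≤ ENNReal.ofReal ⟪u, h⟫_ℝ := by
    have hip : ⟪u, h⟫_ℝ = ∫ x, ⟪(u : X → H) x, h₀ x⟫_ℝ ∂μ := by
      rw [MeasureTheory.L2.inner_def]
      exact integral_congr_ae (hcoe.mono fun x hx => by simp only [hx])
    have hint : Integrable (fun x => ⟪(u : X → H) x, h₀ x⟫_ℝ) μ := by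
      have := MeasureTheory.L2.integrable_inner (𝕜 := ℝ) u h
      exact this.congr (hcoe.mono fun x hx => by simp only [hx])
    have hpt : ∀ x, ⟪(u : X → H) x, h₀ x⟫_ℝ = B.indicator (fun y => ‖(u : X → H) y‖⁻¹ * ‖(u : X → H) y‖^2) x := by
      intro x
      rw [hh₀]
      by_cases hx : x ∈ B
      · simp only [Set.indicator_of_mem hx]
        rw [real_inner_smul_right, real_inner_self_eq_norm_sq]
      · simp [Set.indicator_of_notMem hx]
    have hnn : 0 ≤ᵐ[μ] fun x => ⟪(u : X → H) x, h₀ x⟫_ℝ := by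
      refine Filter.Eventually.of_forall fun x => ?_
      simp only [Pi.zero_apply]
      rw [hpt]
      by_cases hx : x ∈ B
      · simp only [Set.indicator_of_mem hx]
        positivity
      · simp [Set.indicator_of_notMem hx]
    rw [hip, ofReal_integral_eq_lintegral_ofReal hint hnn]
    calc C' * μ B = ∫⁻ x, B.indicator (fun _ => C') x ∂μ := by
          rw [lintegral_indicator hBmeas]; simp [mul_comm]
      _ ≤ ∫⁻ x, ENNReal.ofReal ⟪(u : X → H) x, h₀ x⟫_ℝ ∂μ := by
          refine lintegral_mono fun x => ?_
          by_cases hx : x ∈ B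
          · rw [Set.indicator_of_mem hx, hpt x, Set.indicator_of_mem hx]
            have hxA : x ∈ A := hBA hx
            rw [hA] at hxA
            have hune : (u : X → H) x ≠ 0 := by
              intro h0
              rw [Set.mem_setOf_eq, h0] at hxA
              simp at hxA
            have : ‖(u : X → H) x‖⁻¹ * ‖(u : X → H) x‖^2 = ‖(u : X → H) x‖ := by
              field_simp [norm_ne_zero_iff.2 hune]
            rw [this]
            have h2 : C' ≤ (‖(u : X → H) x‖₊ : ℝ≥0∞) := (Set.mem_setOf_eq ▸ hxA).le
            rwa [← ENNReal.ofReal_coe_nnreal, coe_nnnorm] at h2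
          · simp [Set.indicator_of_notMem hx]
  -- contradiction
  have := hC h h1fin
  have hfinal : C' * μ B ≤ C * μ B :=
    le_trans hinner (le_trans this (mul_le_mul_right hnorm1 C))
  rw [ENNReal.mul_le_mul_iff_left hBpos.ne' hBfin.ne] at hfinal
  exact absurd hCC' (not_lt.2 hfinal)

lemma coeFn_sum {ι : Type*} (F : Finset ι) (v : ι → Lp H 2 μ) :
    ⇑(∑ i ∈ F, v i) =ᵐ[μ] fun x => ∑ i ∈ F, (v i : X → H) x := by
  classical
  induction F using Finset.induction with
  | empty => simp only [Finset.sum_empty]; exact Lp.coeFn_zero H 2 μ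
  | @insert a s ha ih =>
    have h1 : ⇑(∑ i ∈ insert a s, v i) =ᵐ[μ] ⇑(v a) + ⇑(∑ i ∈ s, v i) := by
      rw [Finset.sum_insert ha]
      exact Lp.coeFn_add _ _
    filter_upwards [h1, ih] with x hx hx2
    rw [hx]
    simp only [Pi.add_apply, Finset.sum_insert ha, hx2]

lemma ae_S_pointwise {ι : Type*} [Countable ι] (b : HilbertBasis ι ℝ (Lp H 2 μ))
    (S : Lp H 2 μ →L[ℝ] Lp H 2 μ) (h : Lp H 2 μ) :
    ∀ᵐ x ∂μ, (‖((S h : Lp H 2 μ) : X → H) x‖₊ : ℝ≥0∞) ^ 2 ≤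
      (∑' i, ENNReal.ofReal (‖((S (b i) : Lp H 2 μ) : X → H) x‖ ^ 2)) *
        ENNReal.ofReal (‖h‖ ^ 2) := by
  classical
  set c : ι → ℝ := fun i => b.repr h i with hc
  have hsum : HasSum (fun i => c i • S (b i)) (S h) := by
    have h2 : HasSum (fun i => c i • b i) h := b.hasSum_repr h
    have h3 := h2.mapL S
    simp only [ContinuousLinearMap.map_smul] at h3
    exact h3
  obtain ⟨Fs, hFs⟩ := (atTop : Filter (Finset ι)).exists_seq_tendsto
  set u : ℕ → Lp H 2 μ := fun n => ∑ i ∈ Fs n, c i • S (b i) with hu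
  have hut : Tendsto u atTop (𝓝 (S h)) := hsum.comp hFs
  have hsn : Tendsto (fun n => eLpNorm (⇑(u n) - ⇑(S h)) 2 μ) atTop (𝓝 0) := by
    have heq : ∀ n, eLpNorm (⇑(u n) - ⇑(S h)) 2 μ = ENNReal.ofReal ‖u n - S h‖ := by
      intro n
      rw [← eLpNorm_congr_ae (Lp.coeFn_sub (u n) (S h)), Lp.norm_def,
        ENNReal.ofReal_toReal (Lp.eLpNorm_ne_top _)]
    simp_rw [heq]
    rw [show (0 : ℝ≥0∞) = ENNReal.ofReal 0 by simp]
    exact (ENNReal.continuous_ofReal.tendsto 0).comp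
      (tendsto_iff_norm_sub_tendsto_zero.mp hut)
  have hmeas : TendstoInMeasure μ (fun n => ⇑(u n)) atTop ⇑(S h) :=
    tendstoInMeasure_of_tendsto_eLpNorm (by norm_num)
      (fun n => Lp.aestronglyMeasurable _) (Lp.aestronglyMeasurable _) hsn
  obtain ⟨ns, _, hae⟩ := hmeas.exists_seq_tendsto_ae
  have hcoe : ∀ n, ⇑(u n) =ᵐ[μ]
      fun x => ∑ i ∈ Fs n, c i • ((S (b i) : Lp H 2 μ) : X → H) x := by
    intro n
    refine (coeFn_sum (Fs n) (fun i => c i • S (b i))).trans ?_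
    have : ∀ i, ((c i • S (b i) : Lp H 2 μ) : X → H) =ᵐ[μ]
        fun x => c i • ((S (b i) : Lp H 2 μ) : X → H) x := fun i => Lp.coeFn_smul _ _
    filter_upwards [ae_all_iff.2 (fun i : {j // j ∈ Fs n} => this (i : ι))] with x hx
    exact Finset.sum_congr rfl fun i hi => hx ⟨i, hi⟩
  filter_upwards [hae, ae_all_iff.2 hcoe] with x hx hx2
  set D : ℝ≥0∞ := ∑' i, ENNReal.ofReal (‖((S (b i) : Lp H 2 μ) : X → H) x‖ ^ 2) with hD
  have hk : ∀ k, (‖(u (ns k) : X → H) x‖₊ : ℝ≥0∞) ^ 2 ≤ D * ENNReal.ofReal (‖h‖ ^ 2) := by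
    intro k
    set F := Fs (ns k)
    set w : ι → H := fun i => ((S (b i) : Lp H 2 μ) : X → H) x with hw
    have hval : (u (ns k) : X → H) x = ∑ i ∈ F, c i • w i := hx2 (ns k)
    have hreal : ‖(u (ns k) : X → H) x‖ ^ 2 ≤ (∑ i ∈ F, (c i) ^ 2) * ∑ i ∈ F, ‖w i‖ ^ 2 := by
      rw [hval]
      calc ‖∑ i ∈ F, c i • w i‖ ^ 2 ≤ (∑ i ∈ F, |c i| * ‖w i‖) ^ 2 := by
            have h1 : ‖∑ i ∈ F, c i • w i‖ ≤ ∑ i ∈ F, |c i| * ‖w i‖ := by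
              refine (norm_sum_le _ _).trans (le_of_eq ?_)
              refine Finset.sum_congr rfl fun i _ => ?_
              rw [norm_smul, Real.norm_eq_abs]
            have h2 : (0:ℝ) ≤ ∑ i ∈ F, |c i| * ‖w i‖ :=
              Finset.sum_nonneg fun i _ => by positivity
            nlinarith [norm_nonneg (∑ i ∈ F, c i • w i)]
        _ ≤ (∑ i ∈ F, |c i| ^ 2) * ∑ i ∈ F, ‖w i‖ ^ 2 :=
            Finset.sum_mul_sq_le_sq_mul_sq F _ _
        _ = (∑ i ∈ F, (c i) ^ 2) * ∑ i ∈ F, ‖w i‖ ^ 2 := by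
            congr 1
            exact Finset.sum_congr rfl fun i _ => sq_abs _
    have hbessel : ∑ i ∈ F, (c i) ^ 2 ≤ ‖h‖ ^ 2 := by
      have := lp.sum_rpow_le_norm_rpow (p := 2) (by norm_num) (b.repr h) F
      rw [show ((2:ℝ≥0∞).toReal) = (2:ℝ) by norm_num] at this
      have hnm : ‖b.repr h‖ = ‖h‖ := b.repr.norm_map h
      calc ∑ i ∈ F, (c i) ^ 2 = ∑ i ∈ F, ‖(b.repr h) i‖ ^ (2:ℝ) := by
            refine Finset.sum_congr rfl fun i _ => ?_
            rw [Real.rpow_two, Real.norm_eq_abs, sq_abs, hc]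
        _ ≤ ‖b.repr h‖ ^ (2:ℝ) := this
        _ = ‖h‖ ^ 2 := by rw [hnm, Real.rpow_two]
    calc (‖(u (ns k) : X → H) x‖₊ : ℝ≥0∞) ^ 2
        = ENNReal.ofReal (‖(u (ns k) : X → H) x‖ ^ 2) := by
          rw [ENNReal.ofReal_pow (norm_nonneg _), ← coe_nnnorm, ENNReal.ofReal_coe_nnreal]
      _ ≤ ENNReal.ofReal ((∑ i ∈ F, (c i) ^ 2) * ∑ i ∈ F, ‖w i‖ ^ 2) :=
          ENNReal.ofReal_le_ofReal hreal
      _ = ENNReal.ofReal (∑ i ∈ F, (c i) ^ 2) * ENNReal.ofReal (∑ i ∈ F, ‖w i‖ ^ 2) :=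
          ENNReal.ofReal_mul (Finset.sum_nonneg fun i _ => sq_nonneg _)
      _ ≤ ENNReal.ofReal (‖h‖ ^ 2) * ENNReal.ofReal (∑ i ∈ F, ‖w i‖ ^ 2) :=
          mul_le_mul_left (ENNReal.ofReal_le_ofReal hbessel) _
      _ = ENNReal.ofReal (‖h‖ ^ 2) * ∑ i ∈ F, ENNReal.ofReal (‖w i‖ ^ 2) := by
          rw [ENNReal.ofReal_sum_of_nonneg (fun i _ => sq_nonneg _)]
      _ ≤ ENNReal.ofReal (‖h‖ ^ 2) * D :=
          mul_le_mul_right (ENNReal.sum_le_tsum _) _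
      _ = D * ENNReal.ofReal (‖h‖ ^ 2) := mul_comm _ _
  have hcont : Continuous fun y : H => ((‖y‖₊ : ℝ≥0∞)) ^ 2 :=
    (ENNReal.continuous_pow 2).comp (ENNReal.continuous_coe.comp continuous_nnnorm)
  have hten : Tendsto (fun k => (‖(u (ns k) : X → H) x‖₊ : ℝ≥0∞) ^ 2) atTop
      (𝓝 ((‖((S h : Lp H 2 μ) : X → H) x‖₊ : ℝ≥0∞) ^ 2)) :=
    (hcont.tendsto _).comp hx
  exact le_of_tendsto hten (Filter.Eventually.of_forall hk)

lemma sqle {a b : ℝ≥0∞} (h : a ^ 2 ≤ b) : a ≤ b ^ (1/2 : ℝ) := by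
  have h1 : a = (a ^ (2:ℕ)) ^ (1/2 : ℝ) := by
    rw [← ENNReal.rpow_natCast a 2, ← ENNReal.rpow_mul]
    norm_num
  rw [h1]
  exact ENNReal.rpow_le_rpow h (by norm_num)

lemma sq_of_le_half {a b : ℝ≥0∞} (h : a ≤ b ^ (1/2 : ℝ)) : a ^ 2 ≤ b := by
  have h2 : (b ^ (1/2:ℝ)) ^ (2:ℕ) = b := by
    rw [← ENNReal.rpow_natCast (b ^ (1/2:ℝ)) 2, ← ENNReal.rpow_mul]
    norm_num
  calc a ^ 2 ≤ (b ^ (1/2:ℝ)) ^ 2 := pow_le_pow_left' h 2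
    _ = b := h2

lemma norm_S_sq (P S : Lp H 2 μ →L[ℝ] Lp H 2 μ)
    (hSsymm : ∀ f g : Lp H 2 μ, ⟪S f, g⟫_ℝ = ⟪f, S g⟫_ℝ) (hS : S ∘L S = P)
    (f : Lp H 2 μ) : ‖S f‖ ^ 2 = ⟪P f, f⟫_ℝ := by
  have hSS : S (S f) = P f := by rw [← hS]; rfl
  rw [← real_inner_self_eq_norm_sq, hSsymm f (S f), hSS, real_inner_comm]

lemma ineq1 {ι : Type*} [Countable ι] (b : HilbertBasis ι ℝ (Lp H 2 μ))
    (P S : Lp H 2 μ →L[ℝ] Lp H 2 μ)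
    (hSsymm : ∀ f g : Lp H 2 μ, ⟪S f, g⟫_ℝ = ⟪f, S g⟫_ℝ) (hS : S ∘L S = P) :
    opN μ P ≤ essSup (fun x => ∑' i,
      ENNReal.ofReal (‖((S (b i) : Lp H 2 μ) : X → H) x‖ ^ 2)) μ := by
  set E := essSup (fun x => ∑' i,
      ENNReal.ofReal (‖((S (b i) : Lp H 2 μ) : X → H) x‖ ^ 2)) μ with hE
  rcases eq_or_ne E ∞ with hEtop | hEtop
  · rw [hEtop]; exact le_top
  refine iSup_le fun f => iSup_le fun hf1 => ?_
  set M := eLpNorm (⇑(P f)) ⊤ μ with hM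
  have hPf : P f = S (S f) := by rw [← hS]; rfl
  -- a.e. bound
  have hDae : ∀ᵐ x ∂μ, (∑' i,
      ENNReal.ofReal (‖((S (b i) : Lp H 2 μ) : X → H) x‖ ^ 2)) ≤ E :=
    ae_le_essSup
  have key : ∀ᵐ x ∂μ, (‖((P f : Lp H 2 μ) : X → H) x‖₊ : ℝ≥0∞) ≤
      (E * ENNReal.ofReal (‖S f‖ ^ 2)) ^ (1/2 : ℝ) := by
    filter_upwards [ae_S_pointwise b S (S f), hDae] with x hx hx2
    refine sqle ?_
    rw [hPf]
    exact hx.trans (mul_le_mul_left hx2 _)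
  have hMb : M ≤ (E * ENNReal.ofReal (‖S f‖ ^ 2)) ^ (1/2 : ℝ) := by
    rw [hM, eLpNorm_exponent_top]
    exact essSup_le_of_ae_le _ key
  -- self-improvement
  have hSf : ENNReal.ofReal (‖S f‖ ^ 2) ≤ M := by
    rw [norm_S_sq P S hSsymm hS f]
    calc ENNReal.ofReal ⟪P f, f⟫_ℝ ≤ eLpNorm (⇑(P f)) ⊤ μ * eLpNorm (⇑f) 1 μ := pairing _ _
      _ ≤ M * 1 := mul_le_mul_right hf1 _
      _ = M := mul_one _
  have hMfin : M ≠ ∞ := by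
    intro htop
    rw [htop] at hMb
    have : (E * ENNReal.ofReal (‖S f‖ ^ 2)) ^ (1/2 : ℝ) < ∞ := by
      refine ENNReal.rpow_lt_top_of_nonneg (by norm_num) ?_
      exact ENNReal.mul_ne_top hEtop ENNReal.ofReal_ne_top
    exact absurd (lt_of_le_of_lt hMb this) (by simp)
  have hM2 : M ^ 2 ≤ E * M := by
    refine (sq_of_le_half ?_)
    exact hMb.trans (ENNReal.rpow_le_rpow (mul_le_mul_right hSf E) (by norm_num))
  rcases eq_or_ne M 0 with hM0 | hM0
  · rw [hM0]; exact zero_le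
  · have := hM2
    rw [pow_two] at this
    rwa [ENNReal.mul_le_mul_iff_left hM0 hMfin] at this

lemma ofReal_normS_sq_le (P S : Lp H 2 μ →L[ℝ] Lp H 2 μ)
    (hSsymm : ∀ f g : Lp H 2 μ, ⟪S f, g⟫_ℝ = ⟪f, S g⟫_ℝ) (hS : S ∘L S = P)
    (h : Lp H 2 μ) (hfin : eLpNorm (⇑h) 1 μ ≠ ∞) :
    ENNReal.ofReal (‖S h‖ ^ 2) ≤ opN μ P * eLpNorm (⇑h) 1 μ ^ 2 := by
  rw [norm_S_sq P S hSsymm hS]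
  calc ENNReal.ofReal ⟪P h, h⟫_ℝ ≤ eLpNorm (⇑(P h)) ⊤ μ * eLpNorm (⇑h) 1 μ := pairing _ _
    _ ≤ (opN μ P * eLpNorm (⇑h) 1 μ) * eLpNorm (⇑h) 1 μ :=
        mul_le_mul_left (le_opN P h hfin) _
    _ = opN μ P * eLpNorm (⇑h) 1 μ ^ 2 := by ring

lemma S_two_infty [SigmaFinite μ] (P S : Lp H 2 μ →L[ℝ] Lp H 2 μ)
    (hSsymm : ∀ f g : Lp H 2 μ, ⟪S f, g⟫_ℝ = ⟪f, S g⟫_ℝ) (hS : S ∘L S = P)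
    (g : Lp H 2 μ) :
    eLpNormEssSup (⇑(S g)) μ ≤ (opN μ P) ^ (1/2 : ℝ) * ENNReal.ofReal ‖g‖ := by
  refine dual (S g) _ fun h hfin => ?_
  have h1 : ⟪S g, h⟫_ℝ ≤ ‖g‖ * ‖S h‖ := by
    rw [hSsymm g h]; exact real_inner_le_norm _ _
  have h2 : ENNReal.ofReal ‖S h‖ ≤ (opN μ P * eLpNorm (⇑h) 1 μ ^ 2) ^ (1/2 : ℝ) := by
    refine sqle ?_
    rw [← ENNReal.ofReal_pow (norm_nonneg _)]
    exact ofReal_normS_sq_le P S hSsymm hS h hfin.ne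
  have h3 : (opN μ P * eLpNorm (⇑h) 1 μ ^ 2) ^ (1/2 : ℝ) =
      (opN μ P) ^ (1/2 : ℝ) * eLpNorm (⇑h) 1 μ := by
    rw [ENNReal.mul_rpow_of_nonneg _ _ (by norm_num)]
    congr 1
    rw [← ENNReal.rpow_natCast (eLpNorm (⇑h) 1 μ) 2, ← ENNReal.rpow_mul]
    norm_num
  calc ENNReal.ofReal ⟪S g, h⟫_ℝ ≤ ENNReal.ofReal (‖g‖ * ‖S h‖) :=
        ENNReal.ofReal_le_ofReal h1
    _ = ENNReal.ofReal ‖g‖ * ENNReal.ofReal ‖S h‖ := ENNReal.ofReal_mul (norm_nonneg _)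
    _ ≤ ENNReal.ofReal ‖g‖ * ((opN μ P) ^ (1/2 : ℝ) * eLpNorm (⇑h) 1 μ) := by
        rw [← h3]; exact mul_le_mul_right h2 _
    _ = (opN μ P) ^ (1/2 : ℝ) * ENNReal.ofReal ‖g‖ * eLpNorm (⇑h) 1 μ := by ring

lemma ae_rat [SigmaFinite μ] {ι : Type*} [Countable ι] (b : HilbertBasis ι ℝ (Lp H 2 μ))
    (P S : Lp H 2 μ →L[ℝ] Lp H 2 μ)
    (hSsymm : ∀ f g : Lp H 2 μ, ⟪S f, g⟫_ℝ = ⟪f, S g⟫_ℝ) (hS : S ∘L S = P)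
    (hNfin : opN μ P ≠ ∞) :
    ∀ᵐ x ∂μ, ∀ (F : Finset ι) (q : {j // j ∈ F} → ℚ),
      ‖∑ i : {j // j ∈ F}, (q i : ℝ) • ((S (b ↑i) : Lp H 2 μ) : X → H) x‖ ≤
        Real.sqrt (opN μ P).toReal * Real.sqrt (∑ i : {j // j ∈ F}, (q i : ℝ) ^ 2) := by
  rw [ae_all_iff]
  intro F
  rw [ae_all_iff]
  intro q
  set g : Lp H 2 μ := ∑ i : {j // j ∈ F}, (q i : ℝ) • b ↑i with hg
  have hON : Orthonormal ℝ (fun i : {j // j ∈ F} => b ↑i) :=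
    b.orthonormal.comp _ Subtype.coe_injective
  have hng : ‖g‖ ^ 2 = ∑ i : {j // j ∈ F}, (q i : ℝ) ^ 2 := by
    rw [← real_inner_self_eq_norm_sq, hg, sum_inner]
    refine Finset.sum_congr rfl fun i _ => ?_
    rw [real_inner_smul_left, hON.inner_right_fintype, sq]
  have hSg : S g = ∑ i : {j // j ∈ F}, (q i : ℝ) • S (b ↑i) := by
    rw [hg, map_sum]
    exact Finset.sum_congr rfl fun i _ => by rw [ContinuousLinearMap.map_smul]
  have hcoe : ⇑(S g) =ᵐ[μ]
      fun x => ∑ i : {j // j ∈ F}, (q i : ℝ) • ((S (b ↑i) : Lp H 2 μ) : X → H) x := by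
    rw [hSg]
    refine (coeFn_sum Finset.univ (fun i : {j // j ∈ F} => (q i : ℝ) • S (b ↑i))).trans ?_
    have : ∀ i : {j // j ∈ F}, (((q i : ℝ) • S (b ↑i) : Lp H 2 μ) : X → H) =ᵐ[μ]
        fun x => (q i : ℝ) • ((S (b ↑i) : Lp H 2 μ) : X → H) x := fun i => Lp.coeFn_smul _ _
    filter_upwards [ae_all_iff.2 this] with x hx
    exact Finset.sum_congr rfl fun i _ => hx i
  have hbd := S_two_infty P S hSsymm hS g
  filter_upwards [hcoe, ae_le_eLpNormEssSup (f := ⇑(S g)) (μ := μ)] with x hx hx2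
  rw [← hx]
  have henn : (‖((S g : Lp H 2 μ) : X → H) x‖₊ : ℝ≥0∞) ≤
      (opN μ P) ^ (1/2 : ℝ) * ENNReal.ofReal ‖g‖ := hx2.trans hbd
  have hrhs : ((opN μ P) ^ (1/2 : ℝ) * ENNReal.ofReal ‖g‖) ≠ ∞ :=
    ENNReal.mul_ne_top (ENNReal.rpow_ne_top_of_nonneg (by norm_num) hNfin)
      ENNReal.ofReal_ne_top
  have := ENNReal.toReal_mono hrhs henn
  rw [ENNReal.coe_toReal, coe_nnnorm] at this
  rw [ENNReal.toReal_mul, ENNReal.toReal_ofReal (norm_nonneg _)] at this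
  refine this.trans ?_
  have h1 : ((opN μ P) ^ (1/2 : ℝ)).toReal = Real.sqrt (opN μ P).toReal := by
    rw [← ENNReal.toReal_rpow, Real.sqrt_eq_rpow]
  have h2 : ‖g‖ = Real.sqrt (∑ i : {j // j ∈ F}, (q i : ℝ) ^ 2) := by
    rw [← hng, Real.sqrt_sq (norm_nonneg _)]
  rw [h1, h2]

lemma ineq2 [SigmaFinite μ] [FiniteDimensional ℝ H] {ι : Type*} [Countable ι]
    (b : HilbertBasis ι ℝ (Lp H 2 μ)) (P S : Lp H 2 μ →L[ℝ] Lp H 2 μ)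
    (hSsymm : ∀ f g : Lp H 2 μ, ⟪S f, g⟫_ℝ = ⟪f, S g⟫_ℝ) (hS : S ∘L S = P) :
    essSup (fun x => ∑' i,
        ENNReal.ofReal (‖((S (b i) : Lp H 2 μ) : X → H) x‖ ^ 2)) μ ≤
      (Module.finrank ℝ H : ℝ≥0∞) * opN μ P := by
  rcases eq_or_ne (opN μ P) ∞ with hN | hN
  · rcases Nat.eq_zero_or_pos (Module.finrank ℝ H) with hd | hd
    · have hzero : ∀ y : H, y = 0 := finrank_zero_iff_forall_zero.mp hd
      have hD : ∀ x, (∑' i,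
          ENNReal.ofReal (‖((S (b i) : Lp H 2 μ) : X → H) x‖ ^ 2)) = 0 := by
        intro x
        have : ∀ i, ENNReal.ofReal (‖((S (b i) : Lp H 2 μ) : X → H) x‖ ^ 2) = 0 := by
          intro i
          rw [hzero (((S (b i) : Lp H 2 μ) : X → H) x)]
          simp
        simp [this]
      have : essSup (fun x => ∑' i,
          ENNReal.ofReal (‖((S (b i) : Lp H 2 μ) : X → H) x‖ ^ 2)) μ ≤ 0 :=
        essSup_le_of_ae_le _ (Filter.Eventually.of_forall fun x => le_of_eq (hD x))
      exact this.trans zero_le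
    · rw [hN, ENNReal.mul_top (by exact_mod_cast hd.ne')]
      exact le_top
  · set Nr := (opN μ P).toReal with hNr
    have hNr0 : 0 ≤ Nr := ENNReal.toReal_nonneg
    refine essSup_le_of_ae_le _ ?_
    filter_upwards [ae_rat b P S hSsymm hS hN] with x hx
    set w : ι → H := fun i => ((S (b i) : Lp H 2 μ) : X → H) x with hw
    -- extend to real coefficients
    have hreal : ∀ (F : Finset ι) (c : {j // j ∈ F} → ℝ),
        ‖∑ i : {j // j ∈ F}, c i • w ↑i‖ ≤
          Real.sqrt Nr * Real.sqrt (∑ i : {j // j ∈ F}, c i ^ 2) := by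
      intro F
      have hclosed : IsClosed {c : {j // j ∈ F} → ℝ |
          ‖∑ i : {j // j ∈ F}, c i • w ↑i‖ ≤
            Real.sqrt Nr * Real.sqrt (∑ i : {j // j ∈ F}, c i ^ 2)} := by
        refine isClosed_le ?_ ?_
        · exact (continuous_finset_sum _ fun i _ =>
            (continuous_apply i).smul continuous_const).norm
        · exact continuous_const.mul (Real.continuous_sqrt.comp
            (continuous_finset_sum _ fun i _ => (continuous_apply i).pow 2))
      have hrange : (Set.range fun (q : {j // j ∈ F} → ℚ) => fun i => (q i : ℝ)) =
          Set.pi Set.univ fun _ : {j // j ∈ F} => Set.range ((↑) : ℚ → ℝ) := by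
        ext c
        constructor
        · rintro ⟨q, rfl⟩ i _
          exact ⟨q i, rfl⟩
        · intro hc
          choose q hq using fun i => hc i (Set.mem_univ i)
          exact ⟨q, funext hq⟩
      have hdense : Dense (Set.range fun (q : {j // j ∈ F} → ℚ) => fun i => (q i : ℝ)) := by
        rw [hrange]
        exact dense_pi Set.univ fun i _ => Rat.denseRange_cast
      have hsub : (Set.range fun (q : {j // j ∈ F} → ℚ) => fun i => (q i : ℝ)) ⊆
          {c : {j // j ∈ F} → ℝ |
            ‖∑ i : {j // j ∈ F}, c i • w ↑i‖ ≤
              Real.sqrt Nr * Real.sqrt (∑ i : {j // j ∈ F}, c i ^ 2)} := by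
        rintro _ ⟨q, rfl⟩
        exact hx F q
      intro c
      have hcl := closure_minimal hsub hclosed
      have : c ∈ closure (Set.range fun (q : {j // j ∈ F} → ℚ) => fun i => (q i : ℝ)) := by
        rw [hdense.closure_eq]; trivial
      exact hcl this
    -- inner product bound
    have hv : ∀ (v : H) (F : Finset ι),
        (∑ i : {j // j ∈ F}, ⟪w ↑i, v⟫_ℝ ^ 2) ≤ Nr * ‖v‖ ^ 2 := by
      intro v F
      set cc : {j // j ∈ F} → ℝ := fun i => ⟪w ↑i, v⟫_ℝ with hcc
      set A : ℝ := ∑ i : {j // j ∈ F}, cc i ^ 2 with hA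
      have hA0 : 0 ≤ A := Finset.sum_nonneg fun i _ => sq_nonneg _
      have hinner : A = ⟪∑ i : {j // j ∈ F}, cc i • w ↑i, v⟫_ℝ := by
        rw [sum_inner]
        exact Finset.sum_congr rfl fun i _ => by rw [real_inner_smul_left, ← sq]
      have h3 := hreal F cc
      rw [← hA] at h3
      have h2 : A ≤ (Real.sqrt Nr * Real.sqrt A) * ‖v‖ := by
        calc A = ⟪∑ i : {j // j ∈ F}, cc i • w ↑i, v⟫_ℝ := hinner
          _ ≤ ‖∑ i : {j // j ∈ F}, cc i • w ↑i‖ * ‖v‖ := real_inner_le_norm _ _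
          _ ≤ (Real.sqrt Nr * Real.sqrt A) * ‖v‖ :=
              mul_le_mul_of_nonneg_right h3 (norm_nonneg v)
      nlinarith [sq_nonneg (Real.sqrt A - Real.sqrt Nr * ‖v‖), Real.sq_sqrt hA0,
        Real.sq_sqrt hNr0, Real.sqrt_nonneg A, Real.sqrt_nonneg Nr, norm_nonneg v]
    -- orthonormal basis of H
    set e := stdOrthonormalBasis ℝ H with he
    have hnorm : ∀ y : H, ‖y‖ ^ 2 = ∑ j, ⟪y, e j⟫_ℝ ^ 2 := by
      intro y
      rw [← real_inner_self_eq_norm_sq, ← e.sum_inner_mul_inner y y]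
      exact Finset.sum_congr rfl fun j _ => by rw [real_inner_comm y (e j), ← sq]
    have hF : ∀ F : Finset ι, (∑ i : {j // j ∈ F}, ‖w ↑i‖ ^ 2) ≤
        (Module.finrank ℝ H : ℝ) * Nr := by
      intro F
      calc (∑ i : {j // j ∈ F}, ‖w ↑i‖ ^ 2)
          = ∑ i : {j // j ∈ F}, ∑ j, ⟪w ↑i, e j⟫_ℝ ^ 2 :=
            Finset.sum_congr rfl fun i _ => hnorm _
        _ = ∑ j, ∑ i : {j // j ∈ F}, ⟪w ↑i, e j⟫_ℝ ^ 2 := Finset.sum_comm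
        _ ≤ ∑ _j : Fin (Module.finrank ℝ H), Nr * 1 := by
            refine Finset.sum_le_sum fun j _ => ?_
            have := hv (e j) F
            rwa [e.orthonormal.1 j, one_pow] at this
        _ = (Module.finrank ℝ H : ℝ) * Nr := by
            simp [Finset.sum_const, mul_comm]
    -- conclude
    rw [ENNReal.tsum_eq_iSup_sum]
    refine iSup_le fun F => ?_
    calc (∑ i ∈ F, ENNReal.ofReal (‖w i‖ ^ 2))
        = ENNReal.ofReal (∑ i ∈ F, ‖w i‖ ^ 2) :=
          (ENNReal.ofReal_sum_of_nonneg fun i _ => sq_nonneg _).symm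
      _ = ENNReal.ofReal (∑ i : {j // j ∈ F}, ‖w ↑i‖ ^ 2) := by
          rw [Finset.sum_coe_sort F (fun i => ‖w i‖ ^ 2)]
      _ ≤ ENNReal.ofReal ((Module.finrank ℝ H : ℝ) * Nr) :=
          ENNReal.ofReal_le_ofReal (hF F)
      _ = (Module.finrank ℝ H : ℝ≥0∞) * ENNReal.ofReal Nr := by
          rw [ENNReal.ofReal_mul (by positivity), ENNReal.ofReal_natCast]
      _ ≤ (Module.finrank ℝ H : ℝ≥0∞) * opN μ P :=
          mul_le_mul_right ENNReal.ofReal_toReal_le _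

end Stmt17
end Stmt17Aux

/-- Pinching between ultracontractive norm and density (Proposition 1.1,
inequality (7)).  Here `H` is a `d`-dimensional Hilbert space, `P` a positive
bounded operator on `L²(X,H)` with positive square root `S = P^{1/2}`, the
density function is `Dν_P(x) = Σ_i ‖(P^{1/2} e_i)(x)‖²_H` for a Hilbert basis
`(e_i)`, `D(P)` is its essential supremum, and `‖P‖_{1,∞}` is the `L¹ → L^∞`
operator norm (with `‖f‖_∞ = sup_x ‖f(x)‖_H`, `‖f‖₁ = ∫ ‖f(x)‖_H dμ`).
Then `‖P‖_{1,∞} ≤ D(P) ≤ d · ‖P‖_{1,∞}`. -/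
theorem stmt_17 {X : Type*} [MeasurableSpace X] (μ : Measure X) [SigmaFinite μ]
    {H : Type*} [NormedAddCommGroup H] [InnerProductSpace ℝ H]
    [FiniteDimensional ℝ H]
    {ι : Type*} [Countable ι] (b : HilbertBasis ι ℝ (Lp H 2 μ))
    (P S : Lp H 2 μ →L[ℝ] Lp H 2 μ)
    (hPsymm : ∀ f g, ⟪P f, g⟫_ℝ = ⟪f, P g⟫_ℝ)
    (hPpos : ∀ f, 0 ≤ ⟪P f, f⟫_ℝ)
    (hSsymm : ∀ f g, ⟪S f, g⟫_ℝ = ⟪f, S g⟫_ℝ)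
    (hSpos : ∀ f, 0 ≤ ⟪S f, f⟫_ℝ)
    (hS : S ∘L S = P) :
    (⨆ (f : Lp H 2 μ) (_ : eLpNorm (⇑f) 1 μ ≤ 1), eLpNorm (⇑(P f)) ⊤ μ)
        ≤ essSup (fun x => ∑' i, ENNReal.ofReal (‖(S (b i) : Lp H 2 μ) x‖ ^ 2)) μ ∧
      essSup (fun x => ∑' i, ENNReal.ofReal (‖(S (b i) : Lp H 2 μ) x‖ ^ 2)) μ
        ≤ (Module.finrank ℝ H : ℝ≥0∞) *
          ⨆ (f : Lp H 2 μ) (_ : eLpNorm (⇑f) 1 μ ≤ 1), eLpNorm (⇑(P f)) ⊤ μ := by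
  exact ⟨Stmt17.ineq1 b P S hSsymm hS, Stmt17.ineq2 b P S hSsymm hS⟩
end

section
/- Let A be a positive self-adjoint operator on L²(X,H) with spectral densities F_Ω(λ) = τ(χ_Ω Π_{[0,λ]} χ_Ω), and let ρ be a nonzero positive operator supported in a domain Ω of finite measure with finite energy E(ρ) = τ(ρ^{1/2}Aρ^{1/2}). Then τ(ρ)/(4‖ρ‖_{2,2}) ≤ F_Ω(4⟨A⟩_ρ) ≤ μ(Ω)·F(4⟨A⟩_ρ), where ⟨A⟩_ρ = E(ρ)/τ(ρ) and F(λ) = D(Π_{[0,λ]}) is the density of the spectral projection. -/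
open MeasureTheory Set
open scoped ENNReal InnerProductSpace

/-- The global Faber–Krahn inequality for mixed states (Corollary 1.4,
inequality (18)).  The positive self-adjoint operator `A` on `L²(X,H)` is
encoded by its spectral projections `Pr l = χ_A([0,l])` and spectral measures
`ν g` of states.  For a Hilbert basis `(e_i)`, `F_Ω(λ) = τ(χ_Ω Π_{[0,λ]} χ_Ω)
= Σ_i ∫_Ω ‖(Π_{[0,λ]} e_i)(x)‖² dμ` and `F(λ) = D(Π_{[0,λ]})` is the essential
supremum of the density function of `Π_{[0,λ]}`.  Let `ρ` be a nonzero positive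
operator with positive square root `R`, supported in a domain `Ω` of finite
measure (`χ_Ω ρ χ_Ω = ρ`), with finite trace `τ(ρ) = Σ_i ⟨ρ e_i, e_i⟩`, finite
energy `E(ρ) = τ(ρ^{1/2} A ρ^{1/2}) = Σ_i ∫ x dν_{R e_i}` and expectation value
`⟨A⟩_ρ = E(ρ)/τ(ρ)`.  Then
`τ(ρ)/(4‖ρ‖₂,₂) ≤ F_Ω(4⟨A⟩_ρ) ≤ μ(Ω) F(4⟨A⟩_ρ)`. -/
theorem stmt_19 {X : Type*} [MeasurableSpace X] (μ : Measure X) [SigmaFinite μ]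
    {H : Type*} [NormedAddCommGroup H] [InnerProductSpace ℝ H] [CompleteSpace H]
    {ι : Type*} [Countable ι] (b : HilbertBasis ι ℝ (Lp H 2 μ))
    (Pr : ℝ → (Lp H 2 μ →L[ℝ] Lp H 2 μ))
    (hproj : ∀ l, Pr l ∘L Pr l = Pr l)
    (hsymm : ∀ l f g, ⟪Pr l f, g⟫_ℝ = ⟪f, Pr l g⟫_ℝ)
    (hmono : ∀ l l', l ≤ l' → Pr l' ∘L Pr l = Pr l)
    (ν : Lp H 2 μ → Measure ℝ)
    (hν0 : ∀ g, ν g (Set.Iio 0) = 0)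
    (hν : ∀ g, ∀ l ≥ (0 : ℝ), ν g (Set.Iic l) = ENNReal.ofReal ⟪Pr l g, g⟫_ℝ)
    (hνtot : ∀ g, ν g Set.univ = ENNReal.ofReal (‖g‖ ^ 2))
    (FΩ Fd : ℝ → ℝ≥0∞) (Ω : Set X) (hΩmeas : MeasurableSet Ω) (hΩfin : μ Ω ≠ ⊤)
    (hFΩ : ∀ l, FΩ l = ∑' i, ∫⁻ x in Ω, ENNReal.ofReal (‖(Pr l (b i) : Lp H 2 μ) x‖ ^ 2) ∂μ)
    (hFd : ∀ l, Fd l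
      = essSup (fun x => ∑' i, ENNReal.ofReal (‖(Pr l (b i) : Lp H 2 μ) x‖ ^ 2)) μ)
    (chi : Set X → (Lp H 2 μ →L[ℝ] Lp H 2 μ))
    (hchi : ∀ Ω' : Set X, MeasurableSet Ω' →
      ∀ f : Lp H 2 μ, ⇑(chi Ω' f) =ᵐ[μ] Ω'.indicator ⇑f)
    (ρ R : Lp H 2 μ →L[ℝ] Lp H 2 μ) (hρne : ρ ≠ 0)
    (hρsymm : ∀ f g, ⟪ρ f, g⟫_ℝ = ⟪f, ρ g⟫_ℝ)
    (hρpos : ∀ f, 0 ≤ ⟪ρ f, f⟫_ℝ)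
    (hRsymm : ∀ f g, ⟪R f, g⟫_ℝ = ⟪f, R g⟫_ℝ)
    (hRpos : ∀ f, 0 ≤ ⟪R f, f⟫_ℝ)
    (hR : R ∘L R = ρ)
    (hsupp : chi Ω ∘L ρ ∘L chi Ω = ρ)
    (τρ Eρ : ℝ≥0∞)
    (hτρ : τρ = ∑' i, ENNReal.ofReal ⟪ρ (b i), b i⟫_ℝ)
    (hτρfin : τρ ≠ ⊤)
    (hEρ : Eρ = ∑' i, ∫⁻ x, ENNReal.ofReal x ∂(ν (R (b i))))
    (hEρfin : Eρ ≠ ⊤) :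
    ENNReal.ofReal (τρ.toReal / (4 * ‖ρ‖)) ≤ FΩ (4 * (Eρ.toReal / τρ.toReal)) ∧
      FΩ (4 * (Eρ.toReal / τρ.toReal)) ≤ μ Ω * Fd (4 * (Eρ.toReal / τρ.toReal)) := by
  set l : ℝ := 4 * (Eρ.toReal / τρ.toReal) with hl
  have hl0 : 0 ≤ l := by positivity
  -- Part 2 --
  have part2 : FΩ l ≤ μ Ω * Fd l := by
    rw [hFΩ, hFd]
    have hmeas : ∀ i : ι,
        AEMeasurable (fun x => ENNReal.ofReal (‖(Pr l (b i) : Lp H 2 μ) x‖ ^ 2)) (μ.restrict Ω) :=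
      fun i => ENNReal.measurable_ofReal.comp_aemeasurable
        ((((Lp.aestronglyMeasurable (Pr l (b i))).restrict.norm).aemeasurable).pow_const 2)
    rw [← lintegral_tsum hmeas]
    set G : X → ℝ≥0∞ := fun x => ∑' i, ENNReal.ofReal (‖(Pr l (b i) : Lp H 2 μ) x‖ ^ 2)
    calc ∫⁻ x in Ω, G x ∂μ ≤ ∫⁻ _ in Ω, essSup G μ ∂μ :=
          lintegral_mono_ae (ae_restrict_of_ae (ENNReal.ae_le_essSup G))
      _ = essSup G μ * μ Ω := setLIntegral_const _ _
      _ = μ Ω * essSup G μ := mul_comm _ _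
  refine ⟨?_, part2⟩
  -- Part 1 --
  by_cases hτ0 : τρ = 0
  · simp [hτ0]
  have hρnorm : 0 < ‖ρ‖ := (norm_nonneg ρ).lt_of_ne' (fun h => hρne (ContinuousLinearMap.opNorm_zero_iff ρ |>.mp h))
  -- basic identities
  have hPn : ∀ (l' : ℝ) (g : Lp H 2 μ), ⟪Pr l' g, g⟫_ℝ = ‖Pr l' g‖ ^ 2 := by
    intro l' g
    have h1 : Pr l' (Pr l' g) = Pr l' g := by
      conv_rhs => rw [← hproj l']
      rfl
    rw [← h1, hsymm, ← real_inner_self_eq_norm_sq, h1]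
  have hRρ : ∀ f : Lp H 2 μ, ⟪ρ f, f⟫_ℝ = ‖R f‖ ^ 2 := by
    intro f
    have : ρ f = R (R f) := by rw [← hR]; rfl
    rw [this, hRsymm, real_inner_self_eq_norm_sq]
  have hchiId : ∀ f : Lp H 2 μ, chi Ω (chi Ω f) = chi Ω f := by
    intro f
    apply Lp.ext
    have h1 := hchi Ω hΩmeas (chi Ω f)
    have h2 := hchi Ω hΩmeas f
    refine h1.trans (.trans ?_ h2.symm)
    filter_upwards [h2] with x hx
    by_cases hxΩ : x ∈ Ω
    · simp [Set.indicator_of_mem hxΩ, hx]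
    · simp [Set.indicator_of_notMem hxΩ]
  have hRchi : ∀ f : Lp H 2 μ, R (chi Ω f) = R f := by
    intro f
    set g := f - chi Ω f with hg
    have hgchi : chi Ω g = 0 := by
      rw [hg, map_sub, hchiId, sub_self]
    have hρg : ρ g = 0 := by
      conv_lhs => rw [← hsupp]
      show chi Ω (ρ (chi Ω g)) = 0
      rw [hgchi, map_zero, map_zero]
    have hRg2 : ‖R g‖ ^ 2 = 0 := by rw [← hRρ, hρg, inner_zero_left]
    have hRg : R g = 0 := by
      have := pow_eq_zero_iff (n := 2) (by norm_num) |>.mp hRg2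
      exact norm_eq_zero.mp this
    have : R f - R (chi Ω f) = 0 := by rw [← map_sub, ← hg, hRg]
    exact (sub_eq_zero.mp this).symm
  -- spectral measure identities
  have hIic : ∀ i : ι, ν (R (b i)) (Iic l) = ENNReal.ofReal (‖Pr l (R (b i))‖ ^ 2) := by
    intro i; rw [hν _ l hl0, hPn]
  have hsplit : ∀ g : Lp H 2 μ, ν g (Iic l) + ν g (Ioi l) = ν g univ := by
    intro g
    have := measure_add_measure_compl (μ := ν g) (measurableSet_Iic (a := l))
    rwa [compl_Iic] at this
  have hUnivSum : ∑' i : ι, ν (R (b i)) univ = τρ := by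
    rw [hτρ]; exact tsum_congr fun i => by rw [hνtot, hRρ]
  set T : ℝ≥0∞ := ∑' i : ι, ν (R (b i)) (Ioi l) with hT
  set S : ℝ≥0∞ := ∑' i : ι, ν (R (b i)) (Iic l) with hS
  have hST : S + T = τρ := by
    rw [hS, hT, ← ENNReal.tsum_add, ← hUnivSum]
    exact tsum_congr fun i => hsplit _
  -- Chebyshev bound: 4 * T ≤ τρ
  have hCheb : ∀ g : Lp H 2 μ,
      ENNReal.ofReal l * ν g (Ioi l) ≤ ∫⁻ x, ENNReal.ofReal x ∂(ν g) := by
    intro g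
    calc ENNReal.ofReal l * ν g (Ioi l) = ∫⁻ _ in Ioi l, ENNReal.ofReal l ∂(ν g) :=
          (setLIntegral_const _ _).symm
      _ ≤ ∫⁻ x in Ioi l, ENNReal.ofReal x ∂(ν g) :=
          setLIntegral_mono ENNReal.measurable_ofReal fun x hx =>
            ENNReal.ofReal_le_ofReal (le_of_lt hx)
      _ ≤ ∫⁻ x, ENNReal.ofReal x ∂(ν g) := setLIntegral_le_lintegral _ _
  have h4T : 4 * T ≤ τρ := by
    by_cases hE0 : Eρ = 0
    · have hTz : T = 0 := by
        rw [hT]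
        rw [ENNReal.tsum_eq_zero]
        intro i
        have hi : ∫⁻ x, ENNReal.ofReal x ∂(ν (R (b i))) = 0 := by
          have h0 : (∑' i : ι, ∫⁻ x, ENNReal.ofReal x ∂(ν (R (b i)))) = 0 := by
            rw [← hEρ, hE0]
          exact ENNReal.tsum_eq_zero.mp h0 i
        have hae := (lintegral_eq_zero_iff ENNReal.measurable_ofReal).mp hi
        have hsub : Ioi l ⊆ {x : ℝ | ¬ (ENNReal.ofReal x = (0 : ℝ → ℝ≥0∞) x)} := by
          have hlz : l = 0 := by simp [hl, hE0]
          intro x hx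
          simp only [Set.mem_setOf_eq, Pi.zero_apply, ENNReal.ofReal_eq_zero, not_le]
          rw [hlz] at hx
          exact hx
        exact measure_mono_null hsub (ae_iff.mp hae)
      rw [hTz, mul_zero]; exact zero_le
    · have hEt : 0 < Eρ.toReal := ENNReal.toReal_pos hE0 hEρfin
      have hτt : 0 < τρ.toReal := ENNReal.toReal_pos hτ0 hτρfin
      have hofl : ENNReal.ofReal l = 4 * Eρ / τρ := by
        rw [hl, ENNReal.ofReal_mul (by norm_num), ENNReal.ofReal_div_of_pos hτt,
          ENNReal.ofReal_toReal hEρfin, ENNReal.ofReal_toReal hτρfin, ENNReal.ofReal_ofNat,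
          mul_div_assoc]
      have hchebT : ENNReal.ofReal l * T ≤ Eρ := by
        rw [hT, ← ENNReal.tsum_mul_left, hEρ]
        exact ENNReal.tsum_le_tsum fun i => hCheb _
      rw [hofl] at hchebT
      have h1 : 4 * Eρ / τρ * T = 4 * Eρ * T / τρ := by
        rw [div_eq_mul_inv, div_eq_mul_inv]; ring
      rw [h1, ENNReal.div_le_iff_le_mul (Or.inl hτ0) (Or.inl hτρfin)] at hchebT
      have h2 : Eρ * (4 * T) ≤ Eρ * τρ := by
        calc Eρ * (4 * T) = 4 * Eρ * T := by ring
          _ ≤ Eρ * τρ := hchebT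
      exact (ENNReal.mul_le_mul_iff_right hE0 hEρfin).mp h2
  have hτ4S : τρ ≤ 4 * S := by
    have h4 : 4 * τρ = 4 * S + 4 * T := by rw [← mul_add, hST]
    have h5 : 3 * τρ + τρ ≤ 4 * S + τρ := by
      calc 3 * τρ + τρ = 4 * τρ := by ring
        _ = 4 * S + 4 * T := h4
        _ ≤ 4 * S + τρ := add_le_add_right h4T _
    have h6 : 3 * τρ ≤ 4 * S := (ENNReal.add_le_add_iff_right hτρfin).mp h5
    calc τρ = 1 * τρ := (one_mul _).symm
      _ ≤ 3 * τρ := mul_le_mul_left (by norm_num) _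
      _ ≤ 4 * S := h6
  -- Parseval / trace cyclicity
  have hPar : ∀ f : Lp H 2 μ,
      ENNReal.ofReal (‖f‖ ^ 2) = ∑' j : ι, ENNReal.ofReal (⟪f, b j⟫_ℝ ^ 2) := by
    intro f
    have hterm : ∀ j : ι, ⟪f, b j⟫_ℝ * ⟪b j, f⟫_ℝ = ⟪f, b j⟫_ℝ ^ 2 := fun j => by
      rw [real_inner_comm (b j) f, sq]
    have hsum : Summable (fun j : ι => ⟪f, b j⟫_ℝ ^ 2) := by
      have := (b.hasSum_inner_mul_inner f f).summable
      simpa only [hterm] using this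
    have h1 : ‖f‖ ^ 2 = ∑' j : ι, ⟪f, b j⟫_ℝ ^ 2 := by
      rw [← real_inner_self_eq_norm_sq, ← b.tsum_inner_mul_inner f f]
      exact tsum_congr hterm
    rw [h1, ENNReal.ofReal_tsum_of_nonneg (fun j => sq_nonneg _) hsum]
  have hswap : S = ∑' j : ι, ENNReal.ofReal (‖R (Pr l (b j))‖ ^ 2) := by
    calc S = ∑' i : ι, ENNReal.ofReal (‖Pr l (R (b i))‖ ^ 2) := tsum_congr hIic
      _ = ∑' i : ι, ∑' j : ι, ENNReal.ofReal (⟪Pr l (R (b i)), b j⟫_ℝ ^ 2) :=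
          tsum_congr fun i => hPar _
      _ = ∑' j : ι, ∑' i : ι, ENNReal.ofReal (⟪R (Pr l (b j)), b i⟫_ℝ ^ 2) := by
          rw [ENNReal.tsum_comm]
          exact tsum_congr fun j => tsum_congr fun i => by
            rw [hsymm, hRsymm, real_inner_comm]
      _ = ∑' j : ι, ENNReal.ofReal (‖R (Pr l (b j))‖ ^ 2) :=
          tsum_congr fun j => (hPar _).symm
  -- norm bound through chi Ω
  have hchiNorm : ∀ f : Lp H 2 μ,
      ENNReal.ofReal (‖chi Ω f‖ ^ 2) = ∫⁻ x in Ω, ENNReal.ofReal (‖f x‖ ^ 2) ∂μ := by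
    intro f
    have hae := hchi Ω hΩmeas f
    have h2 : ‖chi Ω f‖ ^ 2 = ∫ x, ‖(chi Ω f : Lp H 2 μ) x‖ ^ 2 ∂μ := by
      rw [← real_inner_self_eq_norm_sq, L2.inner_def]
      exact integral_congr_ae (Filter.Eventually.of_forall fun x =>
        real_inner_self_eq_norm_sq _)
    have hInt : Integrable (fun x => ‖(chi Ω f : Lp H 2 μ) x‖ ^ 2) μ := by
      have := L2.integrable_inner (𝕜 := ℝ) (chi Ω f) (chi Ω f)
      exact this.congr (Filter.Eventually.of_forall fun x => real_inner_self_eq_norm_sq _)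
    rw [h2, MeasureTheory.ofReal_integral_eq_lintegral_ofReal hInt
      (Filter.Eventually.of_forall fun x => sq_nonneg _)]
    calc ∫⁻ x, ENNReal.ofReal (‖(chi Ω f : Lp H 2 μ) x‖ ^ 2) ∂μ
        = ∫⁻ x, Ω.indicator (fun x => ENNReal.ofReal (‖f x‖ ^ 2)) x ∂μ := by
          apply lintegral_congr_ae
          filter_upwards [hae] with x hx
          rw [hx]
          by_cases hxΩ : x ∈ Ω
          · simp [Set.indicator_of_mem hxΩ]
          · simp [Set.indicator_of_notMem hxΩ]
      _ = ∫⁻ x in Ω, ENNReal.ofReal (‖f x‖ ^ 2) ∂μ := lintegral_indicator hΩmeas _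
  have hbound : ∀ j : ι, ENNReal.ofReal (‖R (Pr l (b j))‖ ^ 2)
      ≤ ENNReal.ofReal ‖ρ‖ * ENNReal.ofReal (‖chi Ω (Pr l (b j))‖ ^ 2) := by
    intro j
    set u := chi Ω (Pr l (b j)) with hu
    have h1 : ‖R (Pr l (b j))‖ ^ 2 = ⟪ρ u, u⟫_ℝ := by
      rw [hRρ, hu, hRchi]
    have h2 : ⟪ρ u, u⟫_ℝ ≤ ‖ρ‖ * ‖u‖ ^ 2 := by
      calc ⟪ρ u, u⟫_ℝ ≤ ‖ρ u‖ * ‖u‖ := real_inner_le_norm _ _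
        _ ≤ (‖ρ‖ * ‖u‖) * ‖u‖ :=
            mul_le_mul_of_nonneg_right (ρ.le_opNorm u) (norm_nonneg _)
        _ = ‖ρ‖ * ‖u‖ ^ 2 := by ring
    calc ENNReal.ofReal (‖R (Pr l (b j))‖ ^ 2) ≤ ENNReal.ofReal (‖ρ‖ * ‖u‖ ^ 2) :=
          ENNReal.ofReal_le_ofReal (h1 ▸ h2)
      _ = ENNReal.ofReal ‖ρ‖ * ENNReal.ofReal (‖u‖ ^ 2) :=
          ENNReal.ofReal_mul hρnorm.le
  have hSle : S ≤ ENNReal.ofReal ‖ρ‖ * FΩ l := by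
    rw [hswap, hFΩ]
    calc (∑' j : ι, ENNReal.ofReal (‖R (Pr l (b j))‖ ^ 2))
        ≤ ∑' j : ι, ENNReal.ofReal ‖ρ‖ * ENNReal.ofReal (‖chi Ω (Pr l (b j))‖ ^ 2) :=
          ENNReal.tsum_le_tsum hbound
      _ = ENNReal.ofReal ‖ρ‖ * ∑' j : ι, ENNReal.ofReal (‖chi Ω (Pr l (b j))‖ ^ 2) :=
          ENNReal.tsum_mul_left
      _ = ENNReal.ofReal ‖ρ‖
            * ∑' j : ι, ∫⁻ x in Ω, ENNReal.ofReal (‖(Pr l (b j) : Lp H 2 μ) x‖ ^ 2) ∂μ := by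
          rw [tsum_congr fun j => hchiNorm (Pr l (b j))]
  -- conclude
  have hfin : τρ ≤ FΩ l * ENNReal.ofReal (4 * ‖ρ‖) := by
    calc τρ ≤ 4 * S := hτ4S
      _ ≤ 4 * (ENNReal.ofReal ‖ρ‖ * FΩ l) := mul_le_mul_right hSle _
      _ = FΩ l * ENNReal.ofReal (4 * ‖ρ‖) := by
          rw [ENNReal.ofReal_mul (by norm_num), ENNReal.ofReal_ofNat]
          ring
  have heq : ENNReal.ofReal (τρ.toReal / (4 * ‖ρ‖)) = τρ / ENNReal.ofReal (4 * ‖ρ‖) := by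
    rw [ENNReal.ofReal_div_of_pos (by positivity), ENNReal.ofReal_toReal hτρfin]
  rw [heq, ENNReal.div_le_iff_le_mul
    (Or.inl (by simp [ENNReal.ofReal_eq_zero]; positivity)) (Or.inl ENNReal.ofReal_ne_top)]
  exact hfin
end
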